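/- arXiv:1702.05264 — 5 statements merged into one kernel-verified Lean document; each statement's English description precedes it below -/
import Mathlib

section
/- Let G be a finite connected simple graph on V ≥ 2 vertices with edge connectivity η. Then the spectral gap of the Laplacian matrix satisfies γ_1(G) ≥ 2η(1 − cos(π/V)). -/
open scoped Classical
open Real Finset

/-- The eigenvalues of a Hermitian matrix, listed with multiplicity in increasing order. -/
noncomputable def sortedEigenvalues {n : ℕ} (A : Matrix (Fin n) (Fin n) ℝ) : Fin n → ℝ :=
  if h : A.IsHermitian then h.eigenvalues ∘ ⇑(Tuple.sort h.eigenvalues) else fun _ => 0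

/-- The edge connectivity of a graph: the smallest number of edges whose deletion
disconnects the graph. -/
noncomputable def edgeConnectivity {V : Type*} [Fintype V] (G : SimpleGraph V) : ℕ :=
  sInf {k | ∃ s : Finset (Sym2 V), ↑s ⊆ G.edgeSet ∧ s.card = k ∧
    ¬ (G.deleteEdges ↑s).Connected}

open Matrix
open scoped RealInnerProductSpace

noncomputable section FiedlerAux

variable {n : ℕ}

/-- forward difference sequence of a tuple -/
def fdiff (n : ℕ) (y : Fin n → ℝ) (k : ℕ) : ℝ :=
  if h : k + 1 < n then y ⟨k+1, h⟩ - y ⟨k, by omega⟩ else 0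

/-- the vector implementing one difference -/
def wvec (n : ℕ) (k : ℕ) : Fin n → ℝ :=
  fun i => if (i : ℕ) = k + 1 then 1 else if (i : ℕ) = k then -1 else 0

/-- the path Laplacian matrix -/
def pathT (n : ℕ) : Matrix (Fin n) (Fin n) ℝ :=
  ∑ k ∈ Finset.range (n-1), vecMulVec (wvec n k) (wvec n k)

lemma wvec_dot (y : Fin n → ℝ) (k : ℕ) (hk : k + 1 < n) :
    wvec n k ⬝ᵥ y = fdiff n y k := by
  have h1 : wvec n k = Pi.single (⟨k+1, hk⟩ : Fin n) (1:ℝ) +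
      Pi.single (⟨k, by omega⟩ : Fin n) (-1:ℝ) := by
    funext i
    simp only [wvec, Pi.add_apply, Pi.single_apply, Fin.ext_iff]
    split_ifs <;> (try norm_num) <;> omega
  rw [h1, add_dotProduct, single_dotProduct, single_dotProduct, fdiff, dif_pos hk]
  ring

lemma vecMulVec_mulVec (a b v : Fin n → ℝ) :
    vecMulVec a b *ᵥ v = (b ⬝ᵥ v) • a := by
  funext i
  simp only [Matrix.mulVec, Matrix.vecMulVec_apply, dotProduct, Pi.smul_apply,
    smul_eq_mul, Finset.sum_mul]
  exact Finset.sum_congr rfl fun j _ => by ring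

lemma sumMat_mulVec {ι : Type*} (s : Finset ι) (A : ι → Matrix (Fin n) (Fin n) ℝ)
    (v : Fin n → ℝ) : (∑ k ∈ s, A k) *ᵥ v = ∑ k ∈ s, A k *ᵥ v := by
  funext i
  simp only [Matrix.mulVec, dotProduct, Finset.sum_apply, Matrix.sum_apply,
    Finset.sum_mul]
  rw [Finset.sum_comm]

lemma dot_sumVec {ι : Type*} (s : Finset ι) (y : Fin n → ℝ) (f : ι → Fin n → ℝ) :
    y ⬝ᵥ (∑ k ∈ s, f k) = ∑ k ∈ s, y ⬝ᵥ f k := by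
  simp only [dotProduct, Finset.sum_apply, Finset.mul_sum]
  rw [Finset.sum_comm]

lemma pathT_mulVec (v : Fin n → ℝ) :
    pathT n *ᵥ v = ∑ k ∈ Finset.range (n-1), fdiff n v k • wvec n k := by
  rw [pathT, sumMat_mulVec]
  refine Finset.sum_congr rfl fun k hk => ?_
  rw [vecMulVec_mulVec, wvec_dot v k (by simp at hk; omega)]

lemma dot_pathT (y : Fin n → ℝ) :
    y ⬝ᵥ (pathT n *ᵥ y) = ∑ k ∈ Finset.range (n-1), (fdiff n y k)^2 := by
  rw [pathT_mulVec, dot_sumVec]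
  refine Finset.sum_congr rfl fun k hk => ?_
  rw [dotProduct_smul, dotProduct_comm, wvec_dot y k (by simp at hk; omega)]
  simp [sq]

lemma pathT_isHermitian : (pathT n).IsHermitian := by
  unfold Matrix.IsHermitian
  rw [Matrix.conjTranspose_eq_transpose_of_trivial, pathT, Matrix.transpose_sum]
  refine Finset.sum_congr rfl fun k _ => ?_
  funext i j
  simp [Matrix.transpose_apply, vecMulVec, mul_comm]

lemma pathT_row (v : Fin n → ℝ) (i : Fin n) : (pathT n *ᵥ v) i =
    ∑ k ∈ Finset.range (n-1), fdiff n v k *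
      (if (i:ℕ) = k+1 then 1 else if (i:ℕ) = k then -1 else 0) := by
  rw [pathT_mulVec]
  simp [wvec, Finset.sum_apply]

lemma pathT_row_first (hn : 2 ≤ n) (v : Fin n → ℝ) :
    (pathT n *ᵥ v) ⟨0, by omega⟩ = v ⟨0, by omega⟩ - v ⟨1, hn⟩ := by
  rw [pathT_row]
  simp only [Fin.val_mk]
  have h : ∀ k ∈ Finset.range (n-1), fdiff n v k *
      (if (0:ℕ) = k+1 then 1 else if (0:ℕ) = k then -1 else 0)
      = (if k = 0 then -(fdiff n v 0) else 0) := by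
    intro k hk
    rcases eq_or_ne k 0 with rfl | hk0
    · rw [if_neg (by omega), if_pos rfl, if_pos rfl]; ring
    · rw [if_neg (by omega), if_neg (by omega), if_neg hk0]; ring
  rw [Finset.sum_congr rfl h, Finset.sum_ite_eq' (Finset.range (n-1)) 0,
    if_pos (Finset.mem_range.2 (by omega))]
  rw [fdiff, dif_pos (by omega : 0 + 1 < n)]
  ring

lemma pathT_row_last (hn : 2 ≤ n) (v : Fin n → ℝ) :
    (pathT n *ᵥ v) ⟨n-1, by omega⟩ = v ⟨n-1, by omega⟩ - v ⟨n-2, by omega⟩ := by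
  rw [pathT_row]
  simp only [Fin.val_mk]
  have h : ∀ k ∈ Finset.range (n-1), fdiff n v k *
      (if (n-1:ℕ) = k+1 then 1 else if (n-1:ℕ) = k then -1 else 0)
      = (if k = n-2 then fdiff n v (n-2) else 0) := by
    intro k hk
    rw [Finset.mem_range] at hk
    rcases eq_or_ne k (n-2) with rfl | hk0
    · rw [if_pos (by omega), if_pos rfl]; ring
    · rw [if_neg (by omega), if_neg (by omega), if_neg hk0]; ring
  rw [Finset.sum_congr rfl h, Finset.sum_ite_eq' (Finset.range (n-1)) (n-2),
    if_pos (Finset.mem_range.2 (by omega))]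
  rw [fdiff, dif_pos (by omega : n-2 + 1 < n)]
  have e1 : (⟨n-2+1, by omega⟩ : Fin n) = ⟨n-1, by omega⟩ := Fin.ext (by simp; omega)
  rw [e1]

lemma pathT_row_mid (v : Fin n → ℝ) (i : ℕ) (h1 : 0 < i) (h2 : i < n-1) :
    (pathT n *ᵥ v) ⟨i, by omega⟩ =
      2 * v ⟨i, by omega⟩ - v ⟨i-1, by omega⟩ - v ⟨i+1, by omega⟩ := by
  rw [pathT_row]
  simp only [Fin.val_mk]
  have h : ∀ k ∈ Finset.range (n-1), fdiff n v k *
      (if i = k+1 then 1 else if i = k then -1 else 0)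
      = (if k = i then -(fdiff n v i) else 0) + (if k = i-1 then fdiff n v (i-1) else 0) := by
    intro k hk
    rcases eq_or_ne k i with rfl | hki
    · rw [if_neg (by omega), if_pos rfl, if_pos rfl, if_neg (by omega)]; ring
    · rcases eq_or_ne k (i-1) with rfl | hk2
      · rw [if_pos (by omega), if_neg hki, if_pos rfl]; ring
      · rw [if_neg (by omega), if_neg (by omega), if_neg hki, if_neg hk2]; ring
  rw [Finset.sum_congr rfl h, Finset.sum_add_distrib,
    Finset.sum_ite_eq' (Finset.range (n-1)) i, Finset.sum_ite_eq' (Finset.range (n-1)) (i-1),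
    if_pos (Finset.mem_range.2 (by omega)), if_pos (Finset.mem_range.2 (by omega))]
  rw [fdiff, fdiff, dif_pos (by omega : i + 1 < n), dif_pos (by omega : i - 1 + 1 < n)]
  have e1 : (⟨i-1+1, by omega⟩ : Fin n) = ⟨i, by omega⟩ := Fin.ext (by simp; omega)
  rw [e1]
  ring

lemma dot_eq_inner (u v : EuclideanSpace ℝ (Fin n)) :
    (u : Fin n → ℝ) ⬝ᵥ (v : Fin n → ℝ) = ⟪u, v⟫ := by
  simp [dotProduct, PiLp.inner_apply, RCLike.inner_apply, mul_comm]

lemma toEuclideanLin_eigen (A : Matrix (Fin n) (Fin n) ℝ) (hA : A.IsHermitian) (i : Fin n) :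
    Matrix.toEuclideanLin A (hA.eigenvectorBasis i) =
      hA.eigenvalues i • hA.eigenvectorBasis i := by
  have h := hA.mulVec_eigenvectorBasis i
  apply (WithLp.equiv 2 (Fin n → ℝ)).injective
  simpa [Matrix.toEuclideanLin_apply] using h

lemma toEuclideanLin_expand (A : Matrix (Fin n) (Fin n) ℝ) (hA : A.IsHermitian)
    (x : EuclideanSpace ℝ (Fin n)) :
    Matrix.toEuclideanLin A x =
      ∑ i, (hA.eigenvalues i * ⟪hA.eigenvectorBasis i, x⟫) • hA.eigenvectorBasis i := by
  conv_lhs => rw [← hA.eigenvectorBasis.sum_repr' x]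
  rw [map_sum]
  refine Finset.sum_congr rfl fun i _ => ?_
  rw [_root_.map_smul, toEuclideanLin_eigen A hA i, smul_smul, mul_comm]

lemma dot_mulVec_eigen (A : Matrix (Fin n) (Fin n) ℝ) (hA : A.IsHermitian)
    (x : EuclideanSpace ℝ (Fin n)) :
    (x : Fin n → ℝ) ⬝ᵥ (A *ᵥ (x : Fin n → ℝ)) =
      ∑ i, hA.eigenvalues i * ⟪hA.eigenvectorBasis i, x⟫^2 := by
  have h1 : (x : Fin n → ℝ) ⬝ᵥ (A *ᵥ (x : Fin n → ℝ)) = ⟪x, Matrix.toEuclideanLin A x⟫ :=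
    dot_eq_inner x (Matrix.toEuclideanLin A x)
  rw [h1, toEuclideanLin_expand A hA x, inner_sum]
  refine Finset.sum_congr rfl fun i _ => ?_
  rw [real_inner_smul_right, real_inner_comm]
  ring

lemma dot_self_eigen (A : Matrix (Fin n) (Fin n) ℝ) (hA : A.IsHermitian)
    (x : EuclideanSpace ℝ (Fin n)) :
    (x : Fin n → ℝ) ⬝ᵥ (x : Fin n → ℝ) = ∑ i, ⟪hA.eigenvectorBasis i, x⟫^2 := by
  rw [dot_eq_inner x x]
  nth_rewrite 2 [← hA.eigenvectorBasis.sum_repr' x]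
  rw [inner_sum]
  refine Finset.sum_congr rfl fun i _ => ?_
  rw [real_inner_smul_right, real_inner_comm]
  ring

lemma eig_const (hn : 2 ≤ n) (v : Fin n → ℝ) (lam : ℝ)
    (hv : pathT n *ᵥ v = lam • v)
    (hlt : lam < 2*(1 - Real.cos (π/n))) :
    ∃ cst, ∀ a : Fin n, v a = cst := by
  have hnR : (2:ℝ) ≤ (n:ℝ) := by exact_mod_cast hn
  have hn0 : (0:ℝ) < (n:ℝ) := by linarith
  have hπn : (0:ℝ) < π/n := by positivity
  have hπn2 : π/(n:ℝ) ≤ π/2 :=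
    div_le_div_of_nonneg_left Real.pi_pos.le (by norm_num) hnR
  have hcosn : (0:ℝ) ≤ Real.cos (π/n) :=
    Real.cos_nonneg_of_mem_Icc ⟨by linarith, hπn2⟩
  by_cases hvz : v = 0
  · exact ⟨0, fun a => by rw [hvz]; rfl⟩
  have hvv : 0 < v ⬝ᵥ v := by
    have hnn : 0 ≤ v ⬝ᵥ v := Finset.sum_nonneg fun i _ => mul_self_nonneg _
    rcases hnn.lt_or_eq with hlt' | heq
    · exact hlt'
    · exfalso
      apply hvz
      funext i
      have := (Finset.sum_eq_zero_iff_of_nonneg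
        (fun i _ => mul_self_nonneg (v i))).1 heq.symm i (Finset.mem_univ i)
      exact mul_self_eq_zero.1 this
  have hlam0 : 0 ≤ lam := by
    have hq : v ⬝ᵥ (pathT n *ᵥ v) = lam * (v ⬝ᵥ v) := by
      rw [hv]
      simp [dotProduct, Finset.mul_sum, mul_assoc, mul_left_comm]
    rw [dot_pathT] at hq
    have hnn : (0:ℝ) ≤ ∑ k ∈ Finset.range (n-1), (fdiff n v k)^2 :=
      Finset.sum_nonneg fun k _ => sq_nonneg _
    nlinarith
  have hlam2 : lam < 2 := by linarith
  set t := Real.arccos (1 - lam/2) with ht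
  have hct : Real.cos t = 1 - lam/2 := Real.cos_arccos (by linarith) (by linarith)
  have ht0 : 0 ≤ t := Real.arccos_nonneg _
  have htpi : t ≤ π := Real.arccos_le_pi _
  have htn : t < π/n := by
    by_contra hcon
    push_neg at hcon
    have h2 : Real.cos t ≤ Real.cos (π/n) := by
      rcases eq_or_lt_of_le hcon with h | h
      · rw [h]
      · exact (Real.cos_lt_cos_of_nonneg_of_le_pi hπn.le htpi h).le
    rw [hct] at h2
    linarith
  have htc2 : 0 < Real.cos (t/2) :=
    Real.cos_pos_of_mem_Ioo ⟨by linarith [Real.pi_pos], by linarith [Real.pi_pos, hπn2]⟩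
  have hlameq : lam = 2 - 2*Real.cos t := by linarith
  have hrow : ∀ i : Fin n, (pathT n *ᵥ v) i = lam * v i := by
    rw [hv]; intro i; simp
  have key : ∀ k, ∀ hk : k < n, v ⟨k, hk⟩ * Real.cos (t/2)
      = v ⟨0, by omega⟩ * Real.cos ((2*(k:ℝ)+1)*(t/2)) := by
    intro k
    induction k using Nat.twoStepInduction with
    | zero =>
      intro hk
      norm_num
    | one =>
      intro hk
      have h1 := hrow ⟨0, by omega⟩
      rw [pathT_row_first hn v] at h1
      have trig : Real.cos ((2*(1:ℝ)+1)*(t/2)) + Real.cos (t/2)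
          = 2 * Real.cos t * Real.cos (t/2) := by
        have h := Real.cos_add_cos ((2*(1:ℝ)+1)*(t/2)) (t/2)
        rw [h]
        ring_nf
      have hv1 : v ⟨1, hk⟩ = (2*Real.cos t - 1) * v ⟨0, by omega⟩ := by
        rw [hlameq] at h1; linarith
      rw [hv1]
      push_cast
      ring_nf at trig ⊢
      linear_combination (-(v ⟨0, by omega⟩ : ℝ)) * trig
    | more k ihk ihk1 =>
      intro hk
      have e1 := ihk (by omega)
      have e2 := ihk1 (by omega)
      have h1 := hrow ⟨k+1, by omega⟩
      rw [pathT_row_mid v (k+1) (by omega) (by omega)] at h1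
      simp only [Nat.add_sub_cancel] at h1
      have hmk : (⟨k+1+1, by omega⟩ : Fin n) = (⟨k+2, hk⟩ : Fin n) := rfl
      rw [hmk] at h1
      have hv2 : v ⟨k+2, hk⟩ = 2*Real.cos t * v ⟨k+1, by omega⟩ - v ⟨k, by omega⟩ := by
        rw [hlameq] at h1; linarith
      have trig : Real.cos ((2*((k:ℝ)+2)+1)*(t/2)) + Real.cos ((2*(k:ℝ)+1)*(t/2))
          = 2 * Real.cos t * Real.cos ((2*((k:ℝ)+1)+1)*(t/2)) := by
        have h := Real.cos_add_cos ((2*((k:ℝ)+2)+1)*(t/2)) ((2*(k:ℝ)+1)*(t/2))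
        rw [h]
        ring_nf
      push_cast
      push_cast at e1 e2
      ring_nf at trig e1 e2 hv2 ⊢
      linear_combination (norm := ring_nf) Real.cos (t/2) * hv2 + 2*Real.cos t*e2 - e1
        - (v ⟨0, by omega⟩ : ℝ)*trig
  rcases eq_or_lt_of_le ht0 with h | h
  · -- t = 0, lam = 0, v constant
    refine ⟨v ⟨0, by omega⟩, fun a => ?_⟩
    have hk := key a.1 a.2
    rw [← h] at hk
    norm_num at hk
    have : (⟨a.1, a.2⟩ : Fin n) = a := rfl
    rw [← this]
    exact hk
  · -- t > 0, v0 = 0, all zero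
    have h1 := hrow ⟨n-1, by omega⟩
    rw [pathT_row_last hn v] at h1
    have e1 := key (n-2) (by omega)
    have e2 := key (n-1) (by omega)
    have c1 : ((n-2 : ℕ) : ℝ) = (n:ℝ) - 2 := by
      push_cast [Nat.cast_sub (by omega : 2 ≤ n)]; ring
    have c2 : ((n-1 : ℕ) : ℝ) = (n:ℝ) - 1 := by
      push_cast [Nat.cast_sub (by omega : 1 ≤ n)]; ring
    rw [c1] at e1
    rw [c2] at e2
    have trig : Real.cos ((2*((n:ℝ)-1)+1+2)*(t/2)) + Real.cos ((2*((n:ℝ)-2)+1)*(t/2))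
        = 2 * Real.cos t * Real.cos ((2*((n:ℝ)-1)+1)*(t/2)) := by
      have hh := Real.cos_add_cos ((2*((n:ℝ)-1)+1+2)*(t/2)) ((2*((n:ℝ)-2)+1)*(t/2))
      rw [hh]
      ring_nf
    have trig2 : Real.cos ((2*((n:ℝ)-1)+1)*(t/2)) - Real.cos ((2*((n:ℝ)-1)+1+2)*(t/2))
        = 2 * Real.sin ((n:ℝ)*t) * Real.sin (t/2) := by
      have hh := Real.cos_sub_cos ((2*((n:ℝ)-1)+1)*(t/2)) ((2*((n:ℝ)-1)+1+2)*(t/2))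
      rw [hh]
      have : Real.sin (((2*((n:ℝ)-1)+1)*(t/2) - (2*((n:ℝ)-1)+1+2)*(t/2))/2) = - Real.sin (t/2) := by
        rw [show ((2*((n:ℝ)-1)+1)*(t/2) - (2*((n:ℝ)-1)+1+2)*(t/2))/2 = -(t/2) by ring]
        exact Real.sin_neg _
      rw [this]
      rw [show ((2*((n:ℝ)-1)+1)*(t/2) + (2*((n:ℝ)-1)+1+2)*(t/2))/2 = (n:ℝ)*t by ring]
      ring
    have hsin1 : 0 < Real.sin ((n:ℝ)*t) := by
      apply Real.sin_pos_of_pos_of_lt_pi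
      · positivity
      · calc (n:ℝ)*t < (n:ℝ)*(π/n) := by
              apply mul_lt_mul_of_pos_left htn hn0
        _ = π := by field_simp
    have hsin2 : 0 < Real.sin (t/2) := by
      apply Real.sin_pos_of_pos_of_lt_pi
      · linarith
      · linarith [Real.pi_pos]
    -- h1 : v ⟨n-1,_⟩ - v ⟨n-2,_⟩ = lam * v ⟨n-1,_⟩
    have hv0 : v ⟨0, by omega⟩ = 0 := by
      have hz : v ⟨0, by omega⟩ * (2 * Real.sin ((n:ℝ)*t) * Real.sin (t/2)) = 0 := by
        rw [hlameq] at h1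
        ring_nf at trig trig2 e1 e2 h1 ⊢
        linear_combination (norm := ring_nf) (-(Real.cos (t/2)))*h1 + (2*Real.cos t - 1)*e2 - e1
          - (v ⟨0, by omega⟩ : ℝ)*trig - (v ⟨0, by omega⟩ : ℝ)*trig2
      have hne : (2 * Real.sin ((n:ℝ)*t) * Real.sin (t/2)) ≠ 0 := by positivity
      exact (mul_eq_zero.1 hz).resolve_right hne
    refine ⟨0, fun a => ?_⟩
    have hk := key a.1 a.2
    rw [hv0] at hk
    have : (⟨a.1, a.2⟩ : Fin n) = a := rfl
    rw [← this]
    have := hk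
    simp only [zero_mul] at this
    exact (mul_eq_zero.1 this).resolve_right (ne_of_gt htc2)

lemma wirtinger (hn : 2 ≤ n) (y : Fin n → ℝ) (hy : ∑ k, y k = 0) :
    2*(1 - Real.cos (π/n)) * (y ⬝ᵥ y) ≤ ∑ k ∈ Finset.range (n-1), (fdiff n y k)^2 := by
  have hT : (pathT n).IsHermitian := pathT_isHermitian
  have hQ := dot_mulVec_eigen (pathT n) hT (WithLp.toLp 2 y)
  have hS := dot_self_eigen (pathT n) hT (WithLp.toLp 2 y)
  simp only [WithLp.ofLp_toLp] at hQ hS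
  rw [← dot_pathT y, hQ, hS, Finset.mul_sum]
  apply Finset.sum_le_sum
  intro i _
  by_cases hlt : hT.eigenvalues i < 2*(1 - Real.cos (π/n))
  · obtain ⟨cst, hcst⟩ := eig_const hn (hT.eigenvectorBasis i) (hT.eigenvalues i)
      (hT.mulVec_eigenvectorBasis i) hlt
    have hinner : ⟪hT.eigenvectorBasis i, (WithLp.toLp 2 y : EuclideanSpace ℝ (Fin n))⟫ = 0 := by
      have h2 : ⟪hT.eigenvectorBasis i, (WithLp.toLp 2 y : EuclideanSpace ℝ (Fin n))⟫
          = ∑ a, (hT.eigenvectorBasis i : Fin n → ℝ) a * y a := by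
        simp [PiLp.inner_apply, RCLike.inner_apply, mul_comm]
      rw [h2]
      calc ∑ a, (hT.eigenvectorBasis i : Fin n → ℝ) a * y a
          = ∑ a, cst * y a := Finset.sum_congr rfl fun a _ => by rw [hcst a]
        _ = cst * ∑ a, y a := by rw [Finset.mul_sum]
        _ = 0 := by rw [hy]; ring
    rw [hinner]
    norm_num
  · push_neg at hlt
    have h3 := sq_nonneg ⟪hT.eigenvectorBasis i, (WithLp.toLp 2 y : EuclideanSpace ℝ (Fin n))⟫
    nlinarith

lemma telescope_sq (y : Fin n → ℝ) (hmono : Monotone y) (p q : Fin n) (hpq : p < q) :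
    ∑ k ∈ Finset.Ico (p:ℕ) (q:ℕ), (fdiff n y k)^2 ≤ (y q - y p)^2 := by
  have hn0 : 0 < n := by have := q.isLt; omega
  set F : ℕ → ℝ := fun k => y ⟨min k (n-1), by omega⟩ with hF
  have hFk : ∀ k (hk : k < n), F k = y ⟨k, hk⟩ := by
    intro k hk
    simp only [hF]
    congr 1
    exact Fin.ext (by simp; omega)
  have hd : ∀ k ∈ Finset.Ico (p:ℕ) (q:ℕ), fdiff n y k = F (k+1) - F k := by
    intro k hk
    rw [Finset.mem_Ico] at hk
    have hk1 : k + 1 < n := by have := q.isLt; omega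
    rw [fdiff, dif_pos hk1, hFk (k+1) hk1, hFk k (by omega)]
  have hple : (p:ℕ) ≤ (q:ℕ) := le_of_lt hpq
  have tele : ∑ k ∈ Finset.Ico (p:ℕ) (q:ℕ), fdiff n y k = y q - y p := by
    rw [Finset.sum_congr rfl hd, Finset.sum_Ico_eq_sub _ hple,
      Finset.sum_range_sub, Finset.sum_range_sub]
    rw [hFk (q:ℕ) q.isLt, hFk (p:ℕ) p.isLt]
    simp [Fin.eta]
  have hdnn : ∀ k ∈ Finset.Ico (p:ℕ) (q:ℕ), 0 ≤ fdiff n y k := by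
    intro k hk
    rw [Finset.mem_Ico] at hk
    have hk1 : k+1 < n := by have := q.isLt; omega
    rw [fdiff, dif_pos hk1]
    have hle : (⟨k, by omega⟩ : Fin n) ≤ ⟨k+1, hk1⟩ := by simp [Fin.le_def]
    linarith [hmono hle]
  rw [← tele]
  calc ∑ k ∈ Finset.Ico (p:ℕ) (q:ℕ), (fdiff n y k)^2
      = ∑ k ∈ Finset.Ico (p:ℕ) (q:ℕ), fdiff n y k * fdiff n y k := by
        refine Finset.sum_congr rfl fun k _ => sq (fdiff n y k) ▸ by ring
    _ ≤ ∑ k ∈ Finset.Ico (p:ℕ) (q:ℕ), fdiff n y k * (∑ l ∈ Finset.Ico (p:ℕ) (q:ℕ), fdiff n y l) :=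
        Finset.sum_le_sum (fun k hk =>
          mul_le_mul_of_nonneg_left (Finset.single_le_sum hdnn hk) (hdnn k hk))
    _ = (∑ k ∈ Finset.Ico (p:ℕ) (q:ℕ), fdiff n y k)^2 := by
        rw [← Finset.sum_mul]; ring

lemma quad_bound {V : ℕ} (hV : 2 ≤ V) (G : SimpleGraph (Fin V)) (hG : G.Connected)
    (x : Fin V → ℝ) (hx : ∑ i, x i = 0) :
    2 * (edgeConnectivity G : ℝ) * (1 - Real.cos (π / V)) * (x ⬝ᵥ x)
      ≤ x ⬝ᵥ (G.lapMatrix ℝ *ᵥ x) := by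
  set σ := Tuple.sort x with hσ
  set y : Fin V → ℝ := x ∘ σ with hy
  have hmono : Monotone y := Tuple.monotone_sort x
  set η := edgeConnectivity G with hη
  -- quadratic form formula
  have hQF : x ⬝ᵥ (G.lapMatrix ℝ *ᵥ x)
      = (∑ i, ∑ j, if G.Adj i j then (x i - x j)^2 else 0)/2 := by
    rw [← Matrix.toLinearMap₂'_apply']
    exact G.lapMatrix_toLinearMap₂' ℝ x
  -- reindex by the sorting permutation
  have hre : (∑ i, ∑ j, if G.Adj i j then (x i - x j)^2 else 0)
      = ∑ p, ∑ q, (if G.Adj (σ p) (σ q) then (y p - y q)^2 else 0) := by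
    rw [← Equiv.sum_comp σ (fun i => ∑ j, if G.Adj i j then (x i - x j)^2 else 0)]
    exact Finset.sum_congr rfl fun p _ =>
      (Equiv.sum_comp σ (fun j => if G.Adj (σ p) j then (x (σ p) - x j)^2 else 0)).symm
  -- per-pair lower bound
  set g : Fin V → Fin V → ℝ := fun p q =>
    if G.Adj (σ p) (σ q) ∧ p < q then ∑ k ∈ Finset.Ico (p:ℕ) (q:ℕ), (fdiff V y k)^2 else 0
    with hg
  have htw : ∀ p q, g p q + g q p ≤ (if G.Adj (σ p) (σ q) then (y p - y q)^2 else 0) := by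
    intro p q
    by_cases hadj : G.Adj (σ p) (σ q)
    · rw [if_pos hadj]
      rcases lt_trichotomy p q with h | h | h
      · simp only [hg]
        rw [if_pos ⟨hadj, h⟩, if_neg (by rintro ⟨_, hh⟩; exact absurd h (asymm hh))]
        have := telescope_sq y hmono p q h
        have hsq : (y q - y p)^2 = (y p - y q)^2 := by ring
        linarith [this, hsq ▸ this]
      · exact absurd hadj (by rw [h]; exact G.loopless.irrefl _)
      · simp only [hg]
        rw [if_neg (by rintro ⟨_, hh⟩; exact absurd h (asymm hh)), if_pos ⟨hadj.symm, h⟩]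
        have := telescope_sq y hmono q p h
        have hsq : (y p - y q)^2 = (y q - y p)^2 := by ring
        linarith [this, hsq ▸ this]
    · rw [if_neg hadj]
      simp only [hg]
      rw [if_neg (by rintro ⟨hh, _⟩; exact hadj hh),
        if_neg (by rintro ⟨hh, _⟩; exact hadj hh.symm)]
      norm_num
  -- rewrite g with indicators over range (V-1)
  have hgk : ∀ p q : Fin V, g p q = ∑ k ∈ Finset.range (V-1),
      (if G.Adj (σ p) (σ q) ∧ (p:ℕ) ≤ k ∧ k < (q:ℕ) then (fdiff V y k)^2 else 0) := by
    intro p q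
    by_cases h : G.Adj (σ p) (σ q) ∧ p < q
    · simp only [hg]
      rw [if_pos h]
      have hsub : Finset.Ico (p:ℕ) (q:ℕ) ⊆ Finset.range (V-1) := by
        intro k hk
        rw [Finset.mem_Ico] at hk
        rw [Finset.mem_range]
        have := q.isLt
        omega
      have hcong : ∀ k ∈ Finset.range (V-1),
          (if G.Adj (σ p) (σ q) ∧ (p:ℕ) ≤ k ∧ k < (q:ℕ) then (fdiff V y k)^2 else 0)
          = (if k ∈ Finset.Ico (p:ℕ) (q:ℕ) then (fdiff V y k)^2 else 0) := by
        intro k _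
        congr 1
        simp only [Finset.mem_Ico, eq_iff_iff]
        constructor
        · rintro ⟨_, h1, h2⟩; exact ⟨h1, h2⟩
        · rintro ⟨h1, h2⟩; exact ⟨h.1, h1, h2⟩
      rw [Finset.sum_congr rfl hcong, Finset.sum_ite_mem,
        Finset.inter_eq_right.2 hsub]
    · simp only [hg]
      rw [if_neg h]
      symm
      apply Finset.sum_eq_zero
      intro k _
      rw [if_neg]
      rintro ⟨hadj, h1, h2⟩
      exact h ⟨hadj, by rw [Fin.lt_def]; omega⟩
  -- the pair sets
  set Pset : ℕ → Finset (Fin V × Fin V) := fun k => Finset.univ.filter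
    (fun pq => G.Adj (σ pq.1) (σ pq.2) ∧ (pq.1:ℕ) ≤ k ∧ k < (pq.2:ℕ)) with hPset
  have hcard : ∀ k, (∑ p, ∑ q : Fin V,
      (if G.Adj (σ p) (σ q) ∧ (p:ℕ) ≤ k ∧ k < (q:ℕ) then (fdiff V y k)^2 else 0))
      = ((Pset k).card : ℝ) * (fdiff V y k)^2 := by
    intro k
    rw [← Finset.sum_product', ← Finset.sum_filter, Finset.sum_const, nsmul_eq_mul,
      Finset.univ_product_univ]
  -- cut bound
  have hcut : ∀ k, k < V - 1 → η ≤ (Pset k).card := by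
    intro k hk
    set S : Set (Fin V) := {i | ((σ.symm i : Fin V) : ℕ) ≤ k} with hS
    set cutE : Finset (Sym2 (Fin V)) := G.edgeFinset.filter
      (fun e => ∃ a b, e = s(a,b) ∧ ((σ.symm a : Fin V) : ℕ) ≤ k ∧ k < ((σ.symm b : Fin V) : ℕ))
      with hcutE
    have h1 : η ≤ cutE.card := by
      rw [hη]
      apply Nat.sInf_le
      refine ⟨cutE, ?_, rfl, ?_⟩
      · intro e he
        rw [Finset.mem_coe, hcutE, Finset.mem_filter] at he
        rw [← SimpleGraph.mem_edgeFinset]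
        exact he.1
      · intro hc
        set u := σ ⟨0, by omega⟩ with hu
        set w := σ ⟨V-1, by omega⟩ with hw
        have huS : u ∈ S := by
          show ((σ.symm u : Fin V) : ℕ) ≤ k
          rw [hu, Equiv.symm_apply_apply]
          exact Nat.zero_le k
        have hwS : w ∉ S := by
          intro hcon
          have h5 : ((σ.symm w : Fin V) : ℕ) ≤ k := hcon
          rw [hw, Equiv.symm_apply_apply] at h5
          simp only [Fin.val_mk] at h5
          omega
        obtain ⟨p⟩ := hc.preconnected u w
        obtain ⟨d, _, hdS, hdS'⟩ := p.exists_boundary_dart S huS hwS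
        have hadj := d.adj
        rw [SimpleGraph.deleteEdges_adj] at hadj
        apply hadj.2
        rw [Finset.mem_coe]
        refine Finset.mem_filter.2 ⟨SimpleGraph.mem_edgeFinset.2 hadj.1,
          d.toProd.1, d.toProd.2, rfl, hdS, ?_⟩
        have h5 : ¬ ((σ.symm d.toProd.2 : Fin V) : ℕ) ≤ k := hdS'
        omega
    have h2 : cutE.card ≤ (Pset k).card := by
      have him : cutE ⊆ Finset.image (fun pq : Fin V × Fin V => s(σ pq.1, σ pq.2)) (Pset k) := by
        intro e he
        rw [hcutE, Finset.mem_filter] at he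
        obtain ⟨heE, a, b, rfl, ha, hb⟩ := he
        rw [Finset.mem_image]
        refine ⟨(σ.symm a, σ.symm b), ?_, by simp⟩
        rw [hPset, Finset.mem_filter]
        refine ⟨Finset.mem_univ _, ?_, ha, hb⟩
        simp only [Equiv.apply_symm_apply]
        rw [SimpleGraph.mem_edgeFinset, SimpleGraph.mem_edgeSet] at heE
        exact heE
      exact (Finset.card_le_card him).trans Finset.card_image_le
    omega
  -- assemble
  have hsumy : ∑ p, y p = 0 := by
    calc ∑ p, y p = ∑ p, x (σ p) := rfl
      _ = ∑ i, x i := Equiv.sum_comp σ x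
      _ = 0 := hx
  have hyy : y ⬝ᵥ y = x ⬝ᵥ x := by
    calc y ⬝ᵥ y = ∑ p, x (σ p) * x (σ p) := rfl
      _ = ∑ i, x i * x i := Equiv.sum_comp σ (fun i => x i * x i)
      _ = x ⬝ᵥ x := rfl
  have hwirt := wirtinger hV y hsumy
  have hchain : ∑ k ∈ Finset.range (V-1), ((Pset k).card : ℝ) * (fdiff V y k)^2
      ≥ 2 * (η:ℝ) * (1 - Real.cos (π/V)) * (x ⬝ᵥ x) := by
    have hstep : ∀ k ∈ Finset.range (V-1),
        (η:ℝ) * (fdiff V y k)^2 ≤ ((Pset k).card : ℝ) * (fdiff V y k)^2 := by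
      intro k hk
      rw [Finset.mem_range] at hk
      have := hcut k hk
      have hc : (η:ℝ) ≤ ((Pset k).card : ℝ) := by exact_mod_cast this
      exact mul_le_mul_of_nonneg_right hc (sq_nonneg _)
    have h3 : (η:ℝ) * ∑ k ∈ Finset.range (V-1), (fdiff V y k)^2
        ≤ ∑ k ∈ Finset.range (V-1), ((Pset k).card : ℝ) * (fdiff V y k)^2 := by
      rw [Finset.mul_sum]
      exact Finset.sum_le_sum hstep
    have h4 : (η:ℝ) * (2*(1 - Real.cos (π/V)) * (y ⬝ᵥ y))
        ≤ (η:ℝ) * ∑ k ∈ Finset.range (V-1), (fdiff V y k)^2 :=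
      mul_le_mul_of_nonneg_left hwirt (Nat.cast_nonneg _)
    rw [hyy] at h4
    linarith
  rw [hQF, hre]
  have hfin : ∑ p, ∑ q, (if G.Adj (σ p) (σ q) then (y p - y q)^2 else 0)
      ≥ 2 * ∑ k ∈ Finset.range (V-1), ((Pset k).card : ℝ) * (fdiff V y k)^2 := by
    have hA : ∑ p, ∑ q, (g p q + g q p)
        ≤ ∑ p, ∑ q, (if G.Adj (σ p) (σ q) then (y p - y q)^2 else 0) :=
      Finset.sum_le_sum fun p _ => Finset.sum_le_sum fun q _ => htw p q
    have hB : ∑ p, ∑ q, (g p q + g q p) = 2 * ∑ p, ∑ q, g p q := by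
      calc ∑ p, ∑ q, (g p q + g q p)
          = (∑ p, ∑ q, g p q) + ∑ p, ∑ q, g q p := by
            simp [Finset.sum_add_distrib]
        _ = (∑ p, ∑ q, g p q) + ∑ q, ∑ p, g q p := by rw [Finset.sum_comm]
        _ = 2 * ∑ p, ∑ q, g p q := by ring
    have hC : ∑ p, ∑ q : Fin V, g p q
        = ∑ k ∈ Finset.range (V-1), ((Pset k).card : ℝ) * (fdiff V y k)^2 := by
      have e1 : ∑ p, ∑ q : Fin V, g p q = ∑ p : Fin V, ∑ q : Fin V,
          ∑ k ∈ Finset.range (V-1),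
            (if G.Adj (σ p) (σ q) ∧ (p:ℕ) ≤ k ∧ k < (q:ℕ) then (fdiff V y k)^2 else 0) :=
        Finset.sum_congr rfl fun p _ => Finset.sum_congr rfl fun q _ => hgk p q
      rw [e1]
      rw [Finset.sum_congr rfl fun (p : Fin V) _ => Finset.sum_comm (s := Finset.univ)
        (t := Finset.range (V-1))
        (f := fun q k => if G.Adj (σ p) (σ q) ∧ (p:ℕ) ≤ k ∧ k < (q:ℕ)
          then (fdiff V y k)^2 else 0)]
      rw [Finset.sum_comm]
      exact Finset.sum_congr rfl fun k _ => hcard k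
    linarith
  linarith

end FiedlerAux

theorem fiedler_lower_bound {V : ℕ} (hV : 2 ≤ V) (G : SimpleGraph (Fin V))
    (hG : G.Connected) :
    sortedEigenvalues (G.lapMatrix ℝ) ⟨1, by omega⟩ ≥
      2 * (edgeConnectivity G : ℝ) * (1 - Real.cos (π / V)) := by
  have hL : (G.lapMatrix ℝ).IsHermitian := (SimpleGraph.posSemidef_lapMatrix ℝ G).1
  have hsort : sortedEigenvalues (G.lapMatrix ℝ)
      = hL.eigenvalues ∘ ⇑(Tuple.sort hL.eigenvalues) := by
    rw [sortedEigenvalues, dif_pos hL]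
  rw [hsort]
  set c := 2 * (edgeConnectivity G : ℝ) * (1 - Real.cos (π / V)) with hc
  set τ := Tuple.sort hL.eigenvalues with hτ
  by_contra hcon
  push_neg at hcon
  simp only [Function.comp_apply] at hcon
  have hmono : Monotone (hL.eigenvalues ∘ ⇑τ) := Tuple.monotone_sort hL.eigenvalues
  have h01 : (⟨0, by omega⟩ : Fin V) ≤ ⟨1, by omega⟩ := by simp [Fin.le_def]
  have h0 : hL.eigenvalues (τ ⟨0, by omega⟩) ≤ hL.eigenvalues (τ ⟨1, by omega⟩) := hmono h01
  set i := τ ⟨0, by omega⟩ with hi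
  set j := τ ⟨1, by omega⟩ with hj
  have hij : i ≠ j := by
    rw [hi, hj]
    intro h
    have h2 := τ.injective h
    simp only [Fin.mk.injEq] at h2
    omega
  have hli : hL.eigenvalues i < c := lt_of_le_of_lt h0 hcon
  have hlj : hL.eigenvalues j < c := hcon
  set u := hL.eigenvectorBasis i with hu
  set v := hL.eigenvectorBasis j with hv
  set uf : Fin V → ℝ := fun a => u a with huf
  set vf : Fin V → ℝ := fun a => v a with hvf
  have huu : uf ⬝ᵥ uf = 1 := by
    have h1 : uf ⬝ᵥ uf = ⟪u, u⟫ := dot_eq_inner u u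
    rw [h1, orthonormal_iff_ite.1 hL.eigenvectorBasis.orthonormal i i, if_pos rfl]
  have hvv : vf ⬝ᵥ vf = 1 := by
    have h1 : vf ⬝ᵥ vf = ⟪v, v⟫ := dot_eq_inner v v
    rw [h1, orthonormal_iff_ite.1 hL.eigenvectorBasis.orthonormal j j, if_pos rfl]
  have huv : uf ⬝ᵥ vf = 0 := by
    have h1 : uf ⬝ᵥ vf = ⟪u, v⟫ := dot_eq_inner u v
    rw [h1, orthonormal_iff_ite.1 hL.eigenvectorBasis.orthonormal i j, if_neg hij]
  have hvu : vf ⬝ᵥ uf = 0 := by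
    have h1 : vf ⬝ᵥ uf = ⟪v, u⟫ := dot_eq_inner v u
    rw [h1, orthonormal_iff_ite.1 hL.eigenvectorBasis.orthonormal j i,
      if_neg (Ne.symm hij)]
  set p := ∑ a, uf a with hp
  set q := ∑ a, vf a with hq
  obtain ⟨α, β, hne, horth⟩ : ∃ α β : ℝ, ¬(α = 0 ∧ β = 0) ∧ α * p + β * q = 0 := by
    by_cases hq0 : q = 0
    · exact ⟨0, 1, by simp, by simp [hq0]⟩
    · exact ⟨q, -p, fun h => hq0 h.1, by ring⟩
  set w : Fin V → ℝ := α • uf + β • vf with hw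
  have hsum : ∑ a, w a = 0 := by
    rw [hw]
    simp only [Pi.add_apply, Pi.smul_apply, smul_eq_mul]
    rw [Finset.sum_add_distrib, ← Finset.mul_sum, ← Finset.mul_sum, ← hp, ← hq]
    exact horth
  have hQ := quad_bound hV G hG w hsum
  have hmulu : G.lapMatrix ℝ *ᵥ uf = hL.eigenvalues i • uf := hL.mulVec_eigenvectorBasis i
  have hmulv : G.lapMatrix ℝ *ᵥ vf = hL.eigenvalues j • vf := hL.mulVec_eigenvectorBasis j
  have hLw : G.lapMatrix ℝ *ᵥ w
      = (α * hL.eigenvalues i) • uf + (β * hL.eigenvalues j) • vf := by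
    rw [hw, Matrix.mulVec_add, Matrix.mulVec_smul, Matrix.mulVec_smul, hmulu, hmulv,
      smul_smul, smul_smul, mul_comm α, mul_comm β]
  have hQF : w ⬝ᵥ (G.lapMatrix ℝ *ᵥ w)
      = α^2 * hL.eigenvalues i + β^2 * hL.eigenvalues j := by
    rw [hLw, hw]
    rw [add_dotProduct, smul_dotProduct, smul_dotProduct,
      dotProduct_add, dotProduct_add,
      dotProduct_smul, dotProduct_smul, dotProduct_smul,
      dotProduct_smul, huu, hvv, huv, hvu]
    simp only [smul_eq_mul]
    ring
  have hww : w ⬝ᵥ w = α^2 + β^2 := by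
    rw [hw]
    rw [add_dotProduct, smul_dotProduct, smul_dotProduct,
      dotProduct_add, dotProduct_add,
      dotProduct_smul, dotProduct_smul, dotProduct_smul,
      dotProduct_smul, huu, hvv, huv, hvu]
    simp only [smul_eq_mul]
    ring
  rw [hQF, hww, ← hc] at hQ
  have key : (α^2+β^2) * c ≤ α^2 * hL.eigenvalues i + β^2 * hL.eigenvalues j := by
    linarith
  rcases not_and_or.1 hne with h | h
  · have h2 : α^2 ≠ 0 := pow_ne_zero 2 h
    have h3 : 0 < α^2 := lt_of_le_of_ne (sq_nonneg α) (Ne.symm h2)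
    have a1 : α^2 * hL.eigenvalues i < α^2 * c := mul_lt_mul_of_pos_left hli h3
    have a2 : β^2 * hL.eigenvalues j ≤ β^2 * c :=
      mul_le_mul_of_nonneg_left hlj.le (sq_nonneg β)
    linarith
  · have h2 : β^2 ≠ 0 := pow_ne_zero 2 h
    have h3 : 0 < β^2 := lt_of_le_of_ne (sq_nonneg β) (Ne.symm h2)
    have a1 : β^2 * hL.eigenvalues j < β^2 * c := mul_lt_mul_of_pos_left hlj h3
    have a2 : α^2 * hL.eigenvalues i ≤ α^2 * c :=
      mul_le_mul_of_nonneg_left hli.le (sq_nonneg α)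
    linarith
end

section
/- Let p ∈ (1,∞) and let G be a finite connected simple graph on V ≥ 2 vertices with edge connectivity η. Then the first nontrivial eigenvalue of the discrete p-Laplacian satisfies γ_1^{(p)}(G) ≥ η · γ_1^{(p)}(P_V), where P_V is the path graph on the same number V of vertices. -/
open scoped Classical
open Real Finset

private lemma real_add_rpow {p : ℝ} (hp : 1 ≤ p) {a b : ℝ} (ha : 0 ≤ a) (hb : 0 ≤ b) :
    a ^ p + b ^ p ≤ (a + b) ^ p := by
  lift a to NNReal using ha
  lift b to NNReal using hb
  rw [← NNReal.coe_add, ← NNReal.coe_rpow, ← NNReal.coe_rpow, ← NNReal.coe_rpow,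
    ← NNReal.coe_add]
  exact_mod_cast NNReal.add_rpow_le_rpow_add a b hp

private lemma sum_rpow_le' {ι : Type*} {p : ℝ} (hp : 1 ≤ p) (a : ι → ℝ) :
    ∀ (s : Finset ι), (∀ i ∈ s, 0 ≤ a i) → ∑ i ∈ s, a i ^ p ≤ (∑ i ∈ s, a i) ^ p := by
  intro s
  induction s using Finset.cons_induction with
  | empty => intro _; simp [Real.zero_rpow (by linarith : p ≠ 0)]
  | cons i s his ih =>
    intro ha
    rw [Finset.sum_cons, Finset.sum_cons]
    have h1 : ∑ j ∈ s, a j ^ p ≤ (∑ j ∈ s, a j) ^ p :=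
      ih fun j hj => ha j (Finset.mem_cons_of_mem hj)
    have h2 : (0:ℝ) ≤ ∑ j ∈ s, a j :=
      Finset.sum_nonneg fun j hj => ha j (Finset.mem_cons_of_mem hj)
    calc a i ^ p + ∑ j ∈ s, a j ^ p ≤ a i ^ p + (∑ j ∈ s, a j) ^ p := by linarith
      _ ≤ (a i + ∑ j ∈ s, a j) ^ p :=
        real_add_rpow hp (ha i (Finset.mem_cons_self i s)) h2

private lemma reachable_iff' {α : Type*} {H : SimpleGraph α} {P : α → Prop}
    (h : ∀ u v, H.Adj u v → (P u ↔ P v)) {u v : α} (hr : H.Reachable u v) : P u ↔ P v := by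
  obtain ⟨w⟩ := hr
  induction w with
  | nil => exact Iff.rfl
  | cons hadj _ ih => exact (h _ _ hadj).trans ih
/-- The Rayleigh quotient of the discrete `p`-Laplacian of a finite simple graph. -/
noncomputable def pRayleigh {V : Type*} [Fintype V] (p : ℝ) (G : SimpleGraph V)
    (f : V → ℝ) : ℝ :=
  (∑ e ∈ G.edgeFinset,
      Sym2.lift ⟨fun u v => |f u - f v| ^ p, fun u v => by dsimp only; rw [abs_sub_comm]⟩ e) /
    (⨅ c : ℝ, ∑ v, |f v - c| ^ p)

/-- The first nontrivial eigenvalue of the discrete `p`-Laplacian, defined variationally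
as the infimum of the Rayleigh quotient over nonconstant functions. -/
noncomputable def gamma1p {V : Type*} [Fintype V] (p : ℝ) (G : SimpleGraph V) : ℝ :=
  sInf {r | ∃ f : V → ℝ, (¬ ∃ c : ℝ, ∀ v, f v = c) ∧ r = pRayleigh p G f}

private lemma edgeConnectivity_le_card {α : Type*} [Fintype α] (G : SimpleGraph α)
    (A : Set α) (u w : α) (hu : u ∈ A) (hw : w ∉ A)
    (s : Finset (Sym2 α)) (hs : ↑s ⊆ G.edgeSet)
    (hcut : ∀ x y, G.Adj x y → x ∈ A → y ∉ A → s(x, y) ∈ s) :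
    edgeConnectivity G ≤ s.card := by
  apply Nat.sInf_le
  refine ⟨s, hs, rfl, fun hconn => ?_⟩
  have hreach := hconn.preconnected u w
  have key : ∀ x y, (G.deleteEdges ↑s).Adj x y → (x ∈ A ↔ y ∈ A) := by
    intro x y hxy
    rw [SimpleGraph.deleteEdges_adj] at hxy
    obtain ⟨hadj, hns⟩ := hxy
    constructor
    · intro hx
      by_contra hy
      exact hns (Finset.mem_coe.mpr (hcut x y hadj hx hy))
    · intro hy
      by_contra hx
      apply hns
      rw [Sym2.eq_swap]
      exact Finset.mem_coe.mpr (hcut y x hadj.symm hy hx)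
  exact hw ((reachable_iff' key hreach).mp hu)

private lemma pRayleigh_nonneg {V : Type*} [Fintype V] (p : ℝ) (H : SimpleGraph V)
    (f : V → ℝ) : 0 ≤ pRayleigh p H f := by
  unfold pRayleigh
  apply div_nonneg
  · refine Finset.sum_nonneg fun e _ => ?_
    induction e using Sym2.ind with
    | _ u v => rw [Sym2.lift_mk]; exact Real.rpow_nonneg (abs_nonneg _) p
  · exact le_ciInf fun c => Finset.sum_nonneg fun v _ => Real.rpow_nonneg (abs_nonneg _) p

private lemma gamma1p_bddBelow {V : Type*} [Fintype V] (p : ℝ) (H : SimpleGraph V) :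
    BddBelow {r | ∃ f : V → ℝ, (¬ ∃ c : ℝ, ∀ v, f v = c) ∧ r = pRayleigh p H f} := by
  refine ⟨0, ?_⟩
  rintro r ⟨f, -, rfl⟩
  exact pRayleigh_nonneg p H f
set_option maxHeartbeats 1000000 in
theorem fiedler_pLaplacian {p : ℝ} (hp : 1 < p) {V : ℕ} (hV : 2 ≤ V)
    (G : SimpleGraph (Fin V)) (hG : G.Connected) :
    gamma1p p G ≥ (edgeConnectivity G : ℝ) * gamma1p p (SimpleGraph.pathGraph V) := by
  have hp1 : 1 ≤ p := hp.le
  have hp0 : 0 ≤ p := by linarith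
  rw [ge_iff_le]
  have hne : ¬ ∃ c : ℝ, ∀ v : Fin V, ((v : ℕ) : ℝ) = c := by
    rintro ⟨c, hc⟩
    have h0 := hc ⟨0, by omega⟩
    have h1 := hc ⟨1, by omega⟩
    simp only at h0 h1
    norm_num [← h0] at h1
  refine le_csInf ⟨_, fun v : Fin V => ((v : ℕ) : ℝ), hne, rfl⟩ ?_
  rintro r ⟨f, hf, rfl⟩
  -- sort f
  set σ : Equiv.Perm (Fin V) := Tuple.sort f with hσdef
  set g : Fin V → ℝ := f ∘ ⇑σ with hgdef
  have hg : Monotone g := Tuple.monotone_sort f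
  set rank : Fin V → ℕ := fun v => ((σ.symm v : Fin V) : ℕ) with hrankdef
  have hrank_lt : ∀ v, rank v < V := fun v => (σ.symm v).isLt
  have hrank_inj : ∀ u v, rank u = rank v → u = v := by
    intro u v h
    have : σ.symm u = σ.symm v := Fin.ext h
    exact σ.symm.injective this
  have hrankσ : ∀ (x : Fin V), rank (σ x) = (x : ℕ) := by
    intro x
    simp only [hrankdef, Equiv.symm_apply_apply]
  set F : ℕ → ℝ := fun i => g ⟨min i (V-1), by omega⟩ with hFdef
  have hF : Monotone F := by
    intro i j hij
    exact hg (Fin.mk_le_mk.mpr (by omega))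
  have hFnat : ∀ (x : Fin V), F (x : ℕ) = g x := by
    intro x
    have hx := x.isLt
    simp only [hFdef]
    congr 1
    exact Fin.ext (by simp; omega)
  have hFv : ∀ v, F (rank v) = f v := by
    intro v
    have := hFnat (σ.symm v)
    rw [hrankdef]
    rw [this, hgdef]
    simp only [Function.comp_apply, Equiv.apply_symm_apply]
  set gap : ℕ → ℝ := fun i => F (i+1) - F i with hgapdef
  have hgap : ∀ i, 0 ≤ gap i := fun i => sub_nonneg.mpr (hF (Nat.le_succ i))
  have hgapp : ∀ i, 0 ≤ gap i ^ p := fun i => Real.rpow_nonneg (hgap i) p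
  -- denominators agree
  have hDg : (⨅ c : ℝ, ∑ v, |g v - c| ^ p) = ⨅ c : ℝ, ∑ v, |f v - c| ^ p := by
    refine iInf_congr fun c => ?_
    exact Fintype.sum_equiv σ _ _ (fun v => rfl)
  have hD_pos : (0:ℝ) < ⨅ c : ℝ, ∑ v, |f v - c| ^ p := by
    have hf' := hf
    push_neg at hf'
    obtain ⟨w, hw⟩ := hf' (f (⟨0, by omega⟩ : Fin V))
    set u : Fin V := ⟨0, by omega⟩ with hudef
    have hd : 0 < |f u - f w| := abs_pos.mpr (sub_ne_zero.mpr (Ne.symm hw))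
    refine lt_of_lt_of_le (Real.rpow_pos_of_pos (half_pos hd) p) (le_ciInf fun c => ?_)
    have htri : |f u - f w| ≤ |f u - c| + |f w - c| := by
      have h1 : f u - f w = (f u - c) - (f w - c) := by ring
      rw [h1]
      exact abs_sub _ _
    rcases le_total (|f u - c|) (|f w - c|) with h | h
    · refine le_trans ?_ (Finset.single_le_sum (f := fun v => |f v - c| ^ p)
        (fun v _ => Real.rpow_nonneg (abs_nonneg _) p) (Finset.mem_univ w))
      exact Real.rpow_le_rpow (by positivity) (by linarith) hp0
    · refine le_trans ?_ (Finset.single_le_sum (f := fun v => |f v - c| ^ p)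
        (fun v _ => Real.rpow_nonneg (abs_nonneg _) p) (Finset.mem_univ u))
      exact Real.rpow_le_rpow (by positivity) (by linarith) hp0
  -- g is nonconstant
  have hgnc : ¬ ∃ c : ℝ, ∀ v, g v = c := by
    rintro ⟨c, hc⟩
    refine hf ⟨c, fun v => ?_⟩
    have := hc (σ.symm v)
    rw [hgdef] at this
    simpa only [Function.comp_apply, Equiv.apply_symm_apply] using this
  -- cut functions
  set lo : Sym2 (Fin V) → ℕ :=
    Sym2.lift ⟨fun u v => min (rank u) (rank v), fun u v => by dsimp only; rw [min_comm]⟩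
    with hlodef
  set hi : Sym2 (Fin V) → ℕ :=
    Sym2.lift ⟨fun u v => max (rank u) (rank v), fun u v => by dsimp only; rw [max_comm]⟩
    with hhidef
  -- per-edge lower bound
  have hkey1 : ∀ e ∈ G.edgeFinset,
      ∑ i ∈ Finset.range (V-1), (if lo e ≤ i ∧ i < hi e then gap i ^ p else 0) ≤
        Sym2.lift ⟨fun u v => |f u - f v| ^ p,
          fun u v => by dsimp only; rw [abs_sub_comm]⟩ e := by
    intro e he
    induction e using Sym2.ind with
    | _ u v =>
      rw [SimpleGraph.mem_edgeFinset, SimpleGraph.mem_edgeSet] at he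
      have hne' : rank u ≠ rank v := fun h => G.ne_of_adj he (hrank_inj u v h)
      have hlo : lo s(u, v) = min (rank u) (rank v) := by rw [hlodef, Sym2.lift_mk]
      have hhi : hi s(u, v) = max (rank u) (rank v) := by rw [hhidef, Sym2.lift_mk]
      have hab : min (rank u) (rank v) < max (rank u) (rank v) := by omega
      have hbV : max (rank u) (rank v) ≤ V - 1 := by
        have := hrank_lt u; have := hrank_lt v; omega
      have habs : |f u - f v| = F (max (rank u) (rank v)) - F (min (rank u) (rank v)) := by
        rcases le_total (rank u) (rank v) with h | h
        · rw [← hFv u, ← hFv v, max_eq_right h, min_eq_left h,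
            abs_of_nonpos (sub_nonpos.mpr (hF h)), neg_sub]
        · rw [← hFv u, ← hFv v, max_eq_left h, min_eq_right h,
            abs_of_nonneg (sub_nonneg.mpr (hF h))]
      rw [Sym2.lift_mk]
      dsimp only
      rw [habs, hlo, hhi]
      have htel : F (max (rank u) (rank v)) - F (min (rank u) (rank v)) =
          ∑ i ∈ Finset.Ico (min (rank u) (rank v)) (max (rank u) (rank v)), gap i := by
        rw [Finset.sum_Ico_eq_sub _ hab.le]
        simp only [hgapdef, Finset.sum_range_sub]
        ring
      have hfilter : (Finset.range (V-1)).filter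
          (fun i => min (rank u) (rank v) ≤ i ∧ i < max (rank u) (rank v)) =
          Finset.Ico (min (rank u) (rank v)) (max (rank u) (rank v)) := by
        ext i
        simp only [Finset.mem_filter, Finset.mem_range, Finset.mem_Ico]
        omega
      calc ∑ i ∈ Finset.range (V-1),
            (if min (rank u) (rank v) ≤ i ∧ i < max (rank u) (rank v) then gap i ^ p else 0)
          = ∑ i ∈ Finset.Ico (min (rank u) (rank v)) (max (rank u) (rank v)), gap i ^ p := by
            rw [← Finset.sum_filter, hfilter]
        _ ≤ (∑ i ∈ Finset.Ico (min (rank u) (rank v)) (max (rank u) (rank v)), gap i) ^ p :=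
            sum_rpow_le' hp1 _ _ (fun i _ => hgap i)
        _ = (F (max (rank u) (rank v)) - F (min (rank u) (rank v))) ^ p := by rw [htel]
  -- cut cardinality bound
  have hkey2 : ∀ i ∈ Finset.range (V-1),
      (edgeConnectivity G : ℝ) * gap i ^ p ≤
        ((G.edgeFinset.filter (fun e => lo e ≤ i ∧ i < hi e)).card : ℝ) * gap i ^ p := by
    intro i hmem
    rw [Finset.mem_range] at hmem
    refine mul_le_mul_of_nonneg_right ?_ (hgapp i)
    have hiV : i < V := by omega
    have hi1V : i + 1 < V := by omega
    have hcard : edgeConnectivity G ≤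
        (G.edgeFinset.filter (fun e => lo e ≤ i ∧ i < hi e)).card := by
      refine edgeConnectivity_le_card G {v : Fin V | rank v ≤ i}
        (σ ⟨i, hiV⟩) (σ ⟨i+1, hi1V⟩) ?_ ?_ _ ?_ ?_
      · show rank (σ ⟨i, hiV⟩) ≤ i
        rw [hrankσ]
      · show ¬ rank (σ ⟨i+1, hi1V⟩) ≤ i
        rw [hrankσ]
        simp only [Fin.val_mk]
        omega
      · intro e hmem'
        rw [Finset.mem_coe, Finset.mem_filter, SimpleGraph.mem_edgeFinset] at hmem'
        exact hmem'.1
      · intro x y hadj hx hy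
        simp only [Set.mem_setOf_eq] at hx hy
        rw [Finset.mem_filter, SimpleGraph.mem_edgeFinset, SimpleGraph.mem_edgeSet]
        refine ⟨hadj, ?_, ?_⟩
        · rw [hlodef, Sym2.lift_mk]; dsimp only; omega
        · rw [hhidef, Sym2.lift_mk]; dsimp only; omega
    exact_mod_cast hcard
  -- path numerator bound
  have hkey3 : (∑ e ∈ (SimpleGraph.pathGraph V).edgeFinset,
      Sym2.lift ⟨fun u v => |g u - g v| ^ p,
        fun u v => by dsimp only; rw [abs_sub_comm]⟩ e) ≤
      ∑ i ∈ Finset.range (V-1), gap i ^ p := by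
    set m : Sym2 (Fin V) → ℕ :=
      Sym2.lift ⟨fun u v => min (u : ℕ) (v : ℕ), fun u v => by dsimp only; rw [min_comm]⟩
      with hmdef
    have hrep : ∀ e ∈ (SimpleGraph.pathGraph V).edgeFinset,
        ∃ (a b : Fin V), e = s(a, b) ∧ (a : ℕ) = m e ∧ (b : ℕ) = m e + 1 := by
      intro e he
      induction e using Sym2.ind with
      | _ u v =>
        rw [SimpleGraph.mem_edgeFinset, SimpleGraph.mem_edgeSet,
          SimpleGraph.pathGraph_adj] at he
        have hm : m s(u, v) = min (u : ℕ) (v : ℕ) := by rw [hmdef, Sym2.lift_mk]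
        rcases he with h | h
        · exact ⟨u, v, rfl, by rw [hm]; omega, by rw [hm]; omega⟩
        · exact ⟨v, u, Sym2.eq_swap, by rw [hm]; omega, by rw [hm]; omega⟩
    have hval : ∀ e ∈ (SimpleGraph.pathGraph V).edgeFinset,
        Sym2.lift ⟨fun u v => |g u - g v| ^ p,
          fun u v => by dsimp only; rw [abs_sub_comm]⟩ e = gap (m e) ^ p := by
      intro e he
      obtain ⟨a, b, rfl, ha, hb⟩ := hrep e he
      rw [Sym2.lift_mk]
      dsimp only
      rw [← hFnat a, ← hFnat b]
      have hord : F (a : ℕ) ≤ F (b : ℕ) := hF (by omega)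
      rw [abs_of_nonpos (by linarith), neg_sub]
      congr 1
      simp only [hgapdef]
      rw [← ha, show (b : ℕ) = (a : ℕ) + 1 by omega]
    have hinj : ∀ e ∈ (SimpleGraph.pathGraph V).edgeFinset,
        ∀ e' ∈ (SimpleGraph.pathGraph V).edgeFinset, m e = m e' → e = e' := by
      intro e he e' he' hmm
      obtain ⟨a, b, rfl, ha, hb⟩ := hrep e he
      obtain ⟨a', b', rfl, ha', hb'⟩ := hrep e' he'
      have h1 : a = a' := Fin.ext (by omega)
      have h2 : b = b' := Fin.ext (by omega)
      rw [h1, h2]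
    have hsub : (SimpleGraph.pathGraph V).edgeFinset.image m ⊆ Finset.range (V-1) := by
      refine Finset.image_subset_iff.mpr fun e he => ?_
      obtain ⟨a, b, rfl, ha, hb⟩ := hrep e he
      rw [Finset.mem_range]
      have := b.isLt
      omega
    calc (∑ e ∈ (SimpleGraph.pathGraph V).edgeFinset,
        Sym2.lift ⟨fun u v => |g u - g v| ^ p,
          fun u v => by dsimp only; rw [abs_sub_comm]⟩ e)
        = ∑ e ∈ (SimpleGraph.pathGraph V).edgeFinset, gap (m e) ^ p :=
          Finset.sum_congr rfl hval
      _ = ∑ j ∈ (SimpleGraph.pathGraph V).edgeFinset.image m, gap j ^ p :=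
          (Finset.sum_image (f := fun j => gap j ^ p) hinj).symm
      _ ≤ ∑ i ∈ Finset.range (V-1), gap i ^ p :=
          Finset.sum_le_sum_of_subset_of_nonneg hsub (fun i _ _ => hgapp i)
  -- numerator inequality
  have hnum : (edgeConnectivity G : ℝ) *
      (∑ e ∈ (SimpleGraph.pathGraph V).edgeFinset,
        Sym2.lift ⟨fun u v => |g u - g v| ^ p,
          fun u v => by dsimp only; rw [abs_sub_comm]⟩ e) ≤
      ∑ e ∈ G.edgeFinset,
        Sym2.lift ⟨fun u v => |f u - f v| ^ p,
          fun u v => by dsimp only; rw [abs_sub_comm]⟩ e := by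
    calc (edgeConnectivity G : ℝ) * _ ≤
        (edgeConnectivity G : ℝ) * ∑ i ∈ Finset.range (V-1), gap i ^ p :=
          mul_le_mul_of_nonneg_left hkey3 (Nat.cast_nonneg _)
      _ = ∑ i ∈ Finset.range (V-1), (edgeConnectivity G : ℝ) * gap i ^ p := Finset.mul_sum _ _ _
      _ ≤ ∑ i ∈ Finset.range (V-1),
          ((G.edgeFinset.filter (fun e => lo e ≤ i ∧ i < hi e)).card : ℝ) * gap i ^ p :=
          Finset.sum_le_sum hkey2
      _ = ∑ i ∈ Finset.range (V-1), ∑ e ∈ G.edgeFinset,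
          (if lo e ≤ i ∧ i < hi e then gap i ^ p else 0) := by
          refine Finset.sum_congr rfl fun i _ => ?_
          rw [← Finset.sum_filter, Finset.sum_const, nsmul_eq_mul]
      _ = ∑ e ∈ G.edgeFinset, ∑ i ∈ Finset.range (V-1),
          (if lo e ≤ i ∧ i < hi e then gap i ^ p else 0) := Finset.sum_comm
      _ ≤ _ := Finset.sum_le_sum hkey1
  -- assemble
  have hγP : gamma1p p (SimpleGraph.pathGraph V) ≤ pRayleigh p (SimpleGraph.pathGraph V) g :=
    csInf_le (gamma1p_bddBelow p _) ⟨g, hgnc, rfl⟩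
  have hmain : (edgeConnectivity G : ℝ) * pRayleigh p (SimpleGraph.pathGraph V) g ≤
      pRayleigh p G f := by
    unfold pRayleigh
    rw [hDg, ← mul_div_assoc]
    exact (div_le_div_iff_of_pos_right hD_pos).mpr hnum
  calc (edgeConnectivity G : ℝ) * gamma1p p (SimpleGraph.pathGraph V) ≤
      (edgeConnectivity G : ℝ) * pRayleigh p (SimpleGraph.pathGraph V) g :=
        mul_le_mul_of_nonneg_left hγP (Nat.cast_nonneg _)
    _ ≤ pRayleigh p G f := hmain
end

section
/- Let G be a finite connected simple graph on V ≥ 2 vertices with edge connectivity η and maximal vertex degree deg_max(G). Then the smallest nonzero eigenvalue of the normalized Laplacian satisfies α_1(G) ≥ (2η/deg_max(G)) · (1 − cos(π/V)). -/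
open scoped Classical
open Real Finset

namespace FiedlerAux

/-- The character `e^{2πi t/m}`. -/
noncomputable def ce (m t : ℕ) : ℂ := Complex.exp ((2 * π * t / m : ℝ) * Complex.I)

lemma ce_pow (m b k : ℕ) : ce m b ^ k = ce m (b * k) := by
  unfold ce
  rw [← Complex.exp_nat_mul]
  congr 1
  push_cast
  ring

lemma conj_ce (m t : ℕ) :
    (starRingEnd ℂ) (ce m t) = Complex.exp ((-(2 * π * t / m) : ℝ) * Complex.I) := by
  unfold ce
  rw [← Complex.exp_conj]
  congr 1
  rw [map_mul, Complex.conj_I, Complex.conj_ofReal]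
  push_cast
  ring

lemma ce_mul_conj (m a b : ℕ) :
    ce m a * (starRingEnd ℂ) (ce m b) =
      Complex.exp (((2 * π * a / m - 2 * π * b / m) : ℝ) * Complex.I) := by
  rw [conj_ce]
  unfold ce
  rw [← Complex.exp_add]
  congr 1
  push_cast
  ring

lemma normSq_exp_mul_I_sub_one (θ : ℝ) :
    Complex.normSq (Complex.exp ((θ : ℝ) * Complex.I) - 1) = 2 - 2 * Real.cos θ := by
  rw [Complex.exp_mul_I]
  simp only [Complex.normSq_apply, Complex.sub_re, Complex.add_re, Complex.mul_re,
    Complex.I_re, Complex.I_im, Complex.one_re, Complex.sub_im, Complex.add_im,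
    Complex.mul_im, Complex.one_im, Complex.cos_ofReal_re, Complex.cos_ofReal_im,
    Complex.sin_ofReal_re, Complex.sin_ofReal_im]
  nlinarith [Real.sin_sq_add_cos_sq θ]

lemma orth (m : ℕ) (hm : 0 < m) (j l : ℕ) (hj : j < m) (hl : l < m) :
    ∑ k ∈ range m, ce m (j * k) * (starRingEnd ℂ) (ce m (l * k)) =
      if j = l then (m : ℂ) else 0 := by
  have hterm : ∀ k, ce m (j * k) * (starRingEnd ℂ) (ce m (l * k)) =
      (ce m j * (starRingEnd ℂ) (ce m l)) ^ k := by
    intro k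
    rw [mul_pow, ce_pow, ← map_pow, ce_pow]
  simp only [hterm]
  set z : ℂ := ce m j * (starRingEnd ℂ) (ce m l) with hz
  by_cases hjl : j = l
  · subst hjl
    have hz1 : z = 1 := by
      rw [hz, ce_mul_conj]
      simp
    simp [hz1]
  · have hzval : z = Complex.exp (((2 * π * j / m - 2 * π * l / m) : ℝ) * Complex.I) :=
      ce_mul_conj m j l
    have hzne : z ≠ 1 := by
      rw [hzval]
      intro h
      rw [Complex.exp_eq_one_iff] at h
      obtain ⟨n, hn⟩ := h
      have hI : ((2 * π * j / m - 2 * π * l / m : ℝ) : ℂ) = (n : ℂ) * (2 * π) := by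
        have := hn
        rw [show (n : ℂ) * (2 * ↑π * Complex.I) = ((n : ℂ) * (2 * ↑π)) * Complex.I by ring] at this
        exact mul_right_cancel₀ Complex.I_ne_zero this
      have hreal : (2 * π * j / m - 2 * π * l / m : ℝ) = (n : ℝ) * (2 * π) := by
        exact_mod_cast hI
      have hπ : (0:ℝ) < π := Real.pi_pos
      have hm' : (0:ℝ) < (m:ℝ) := by exact_mod_cast hm
      have hj' : (j : ℝ) - l = n * m := by
        field_simp at hreal
        nlinarith [hreal]
      have hint : (j : ℤ) - l = n * m := by exact_mod_cast hj'
      have hjm : (j : ℤ) < m := by exact_mod_cast hj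
      have hlm : (l : ℤ) < m := by exact_mod_cast hl
      have hjl' : (j : ℤ) ≠ l := by exact_mod_cast hjl
      have hmz : (0:ℤ) < m := by exact_mod_cast hm
      rcases lt_trichotomy n 0 with hn0 | hn0 | hn0
      · nlinarith [Int.ofNat_nonneg j, Int.ofNat_nonneg l]
      · rw [hn0] at hint
        simp only [zero_mul] at hint
        exact hjl' (by omega)
      · nlinarith [Int.ofNat_nonneg j, Int.ofNat_nonneg l]
    rw [geom_sum_eq hzne]
    have hzm : z ^ m = 1 := by
      rw [hzval, ← Complex.exp_nat_mul]
      have : (m : ℂ) * (((2 * π * j / m - 2 * π * l / m) : ℝ) * Complex.I) =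
          ((((j : ℤ) - (l : ℤ)) : ℤ) : ℂ) * (2 * π * Complex.I) := by
        have hm' : ((m:ℂ)) ≠ 0 := by exact_mod_cast hm.ne'
        push_cast
        field_simp
      rw [this, Complex.exp_int_mul_two_pi_mul_I]
    rw [hzm]
    simp [hjl]

/-- Discrete Fourier transform of a real sequence on `range m`. -/
noncomputable def ft (m : ℕ) (w : ℕ → ℝ) (k : ℕ) : ℂ :=
  ∑ j ∈ range m, (w j : ℂ) * ce m (j * k)

lemma parseval (m : ℕ) (hm : 0 < m) (w : ℕ → ℝ) :
    ∑ k ∈ range m, Complex.normSq (ft m w k) = m * ∑ j ∈ range m, (w j) ^ 2 := by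
  have key : ∑ k ∈ range m, (ft m w k) * (starRingEnd ℂ) (ft m w k) =
      (m : ℂ) * ∑ j ∈ range m, ((w j : ℂ)) ^ 2 := by
    have expand : ∀ k, (ft m w k) * (starRingEnd ℂ) (ft m w k) =
        ∑ j ∈ range m, ∑ l ∈ range m,
          ((w j : ℂ) * (w l : ℂ)) * (ce m (j * k) * (starRingEnd ℂ) (ce m (l * k))) := by
      intro k
      rw [ft, map_sum, sum_mul_sum]
      refine Finset.sum_congr rfl fun j hj => Finset.sum_congr rfl fun l hl => ?_
      rw [map_mul, Complex.conj_ofReal]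
      ring
    simp only [expand]
    rw [Finset.sum_comm]
    have : ∀ j ∈ range m, ∑ k ∈ range m, ∑ l ∈ range m,
        ((w j : ℂ) * (w l : ℂ)) * (ce m (j * k) * (starRingEnd ℂ) (ce m (l * k))) =
        (w j : ℂ) ^ 2 * m := by
      intro j hj
      rw [Finset.sum_comm]
      have hj' := Finset.mem_range.mp hj
      have : ∀ l ∈ range m, ∑ k ∈ range m,
          ((w j : ℂ) * (w l : ℂ)) * (ce m (j * k) * (starRingEnd ℂ) (ce m (l * k))) =
          if j = l then (w j : ℂ) * (w l : ℂ) * m else 0 := by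
        intro l hl
        rw [← Finset.mul_sum, orth m hm j l hj' (Finset.mem_range.mp hl)]
        split_ifs <;> simp
      rw [Finset.sum_congr rfl this, Finset.sum_ite_eq (range m) j
        (fun l => (w j : ℂ) * (w l : ℂ) * m)]
      simp only [hj, if_true]
      ring
    rw [Finset.sum_congr rfl this, ← Finset.sum_mul]
    ring
  have : ∀ k, (ft m w k) * (starRingEnd ℂ) (ft m w k) =
      ((Complex.normSq (ft m w k) : ℝ) : ℂ) := fun k => Complex.mul_conj _
  simp only [this] at key
  exact_mod_cast key

lemma ft_zero (m : ℕ) (w : ℕ → ℝ) (h0 : ∑ j ∈ range m, w j = 0) : ft m w 0 = 0 := by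
  unfold ft ce
  simp only [Nat.mul_zero, Nat.cast_zero, mul_zero, zero_div, Complex.ofReal_zero, zero_mul,
    Complex.exp_zero, mul_one]
  exact_mod_cast congrArg (Complex.ofReal) h0

lemma ce_mm (m k : ℕ) (hm : 0 < m) : ce m (m * k) = 1 := by
  unfold ce
  have : ((2 * π * (m * k) / m : ℝ)) * Complex.I = ((k : ℤ) : ℂ) * (2 * π * Complex.I) := by
    have hm' : ((m:ℂ)) ≠ 0 := Nat.cast_ne_zero.mpr hm.ne'
    push_cast
    field_simp
  rw [show ((2 * π * ((m * k : ℕ) : ℝ) / m : ℝ)) = (2 * π * ((m:ℝ) * k) / m : ℝ) by push_cast; ring] at *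
  rw [this, Complex.exp_int_mul_two_pi_mul_I]

lemma ft_shift (m : ℕ) (hm : 0 < m) (w : ℕ → ℝ) (hper : ∀ j, w (j + m) = w j) (k : ℕ) :
    ft m (fun j => w (j + 1) - w j) k = ((starRingEnd ℂ) (ce m k) - 1) * ft m w k := by
  have hsh : ∑ j ∈ range m, (w (j + 1) : ℂ) * ce m (j * k) =
      (starRingEnd ℂ) (ce m k) * ft m w k := by
    have step : ∀ j, (w (j + 1) : ℂ) * ce m (j * k) =
        (starRingEnd ℂ) (ce m k) * ((w (j + 1) : ℂ) * ce m ((j + 1) * k)) := by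
      intro j
      rw [conj_ce]
      unfold ce
      have hexp : Complex.exp ((-(2 * π * k / m) : ℝ) * Complex.I) *
          Complex.exp (((2 * π * (((j + 1) * k : ℕ)) / m : ℝ)) * Complex.I) =
          Complex.exp (((2 * π * ((j * k : ℕ)) / m : ℝ)) * Complex.I) := by
        rw [← Complex.exp_add]
        congr 1
        rw [show ((-(2 * π * k / m) : ℝ) : ℂ) * Complex.I +
            (((2 * π * (((j + 1) * k : ℕ)) / m : ℝ)) : ℂ) * Complex.I =
            (((-(2 * π * k / m) + 2 * π * (((j + 1) * k : ℕ)) / m : ℝ)) : ℂ) * Complex.I by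
          push_cast; ring]
        congr 2
        rcases Nat.eq_zero_or_pos m with h0 | h0
        · subst h0; simp
        · have hm' : ((m:ℝ)) ≠ 0 := by positivity
          push_cast
          field_simp
          ring
      rw [← hexp]
      ring
    calc ∑ j ∈ range m, (w (j + 1) : ℂ) * ce m (j * k)
        = ∑ j ∈ range m, (starRingEnd ℂ) (ce m k) * ((w (j + 1) : ℂ) * ce m ((j + 1) * k)) :=
          Finset.sum_congr rfl fun j _ => step j
      _ = (starRingEnd ℂ) (ce m k) * ∑ j ∈ range m, ((w (j + 1) : ℂ) * ce m ((j + 1) * k)) := by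
          rw [Finset.mul_sum]
      _ = (starRingEnd ℂ) (ce m k) * ft m w k := by
          congr 1
          have hre : ∑ j ∈ range m, ((w (j + 1) : ℂ) * ce m ((j + 1) * k)) =
              (∑ j ∈ range (m + 1), ((w j : ℂ) * ce m (j * k))) - (w 0 : ℂ) * ce m (0 * k) := by
            rw [Finset.sum_range_succ']
            ring
          rw [hre, Finset.sum_range_succ]
          have hwm : (w m : ℂ) = (w 0 : ℂ) := by
            have := hper 0
            simp only [Nat.zero_add] at this
            exact_mod_cast congrArg Complex.ofReal this
          rw [hwm, ce_mm m k hm]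
          simp only [Nat.zero_mul, Nat.mul_zero]
          unfold ft
          have : ce m 0 = 1 := by unfold ce; simp
          rw [this]
          ring
  unfold ft
  simp only [Complex.ofReal_sub, sub_mul]
  rw [Finset.sum_sub_distrib, hsh]
  unfold ft
  ring

lemma coeff_normSq (m k : ℕ) :
    Complex.normSq ((starRingEnd ℂ) (ce m k) - 1) = 2 - 2 * Real.cos (2 * π * k / m) := by
  rw [conj_ce, normSq_exp_mul_I_sub_one, Real.cos_neg]

lemma cos_compare (m k : ℕ) (hm : 0 < m) (hk1 : 1 ≤ k) (hk : k < m) :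
    Real.cos (2 * π * k / m) ≤ Real.cos (2 * π / m) := by
  have hπ := Real.pi_pos
  have hm' : (0:ℝ) < m := by exact_mod_cast hm
  have hk' : (1:ℝ) ≤ (k:ℝ) := by exact_mod_cast hk1
  have hkm : (k:ℝ) ≤ (m:ℝ) - 1 := by
    have : (k:ℝ) + 1 ≤ m := by exact_mod_cast hk
    linarith
  have h1 : (0:ℝ) ≤ 2 * π / m := by positivity
  by_cases hcase : 2 * π * k / m ≤ π
  · apply Real.cos_le_cos_of_nonneg_of_le_pi h1 hcase
    rw [div_le_div_iff₀ hm' hm']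
    have h2 : (1:ℝ) * (2 * π * m) ≤ k * (2 * π * m) := by
      apply mul_le_mul_of_nonneg_right hk'
      positivity
    nlinarith [h2]
  · push_neg at hcase
    rw [show (2 * π * k / m : ℝ) = 2 * π - (2 * π * (m - k) / m) by field_simp; ring,
      Real.cos_two_pi_sub]
    apply Real.cos_le_cos_of_nonneg_of_le_pi h1
    · rw [div_le_iff₀ hm']
      have h3 : π * m < 2 * π * k := (lt_div_iff₀ hm').mp hcase
      nlinarith
    · rw [div_le_div_iff₀ hm' hm']
      have h4 : (1:ℝ) ≤ (m:ℝ) - k := by linarith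
      nlinarith [mul_le_mul_of_nonneg_right h4 (le_of_lt (by positivity : (0:ℝ) < 2 * π * m))]
  
lemma cycle_wirtinger (m : ℕ) (hm : 0 < m) (y : ℕ → ℝ) (hper : ∀ j, y (j + m) = y j)
    (h0 : ∑ j ∈ range m, y j = 0) :
    2 * (1 - Real.cos (2 * π / m)) * ∑ j ∈ range m, (y j) ^ 2 ≤
      ∑ j ∈ range m, (y (j + 1) - y j) ^ 2 := by
  have hP1 := parseval m hm y
  have hP2 := parseval m hm (fun j => y (j + 1) - y j)
  have hz : ∀ k, Complex.normSq (ft m (fun j => y (j + 1) - y j) k) =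
      (2 - 2 * Real.cos (2 * π * k / m)) * Complex.normSq (ft m y k) := by
    intro k
    rw [ft_shift m hm y hper k, Complex.normSq_mul, coeff_normSq]
  have hlow : ∀ k ∈ range m, 2 * (1 - Real.cos (2 * π / m)) * Complex.normSq (ft m y k) ≤
      (2 - 2 * Real.cos (2 * π * k / m)) * Complex.normSq (ft m y k) := by
    intro k hk
    rcases Nat.eq_zero_or_pos k with hk0 | hk0
    · subst hk0
      rw [ft_zero m y h0]
      simp
    · apply mul_le_mul_of_nonneg_right _ (Complex.normSq_nonneg _)
      have := cos_compare m k hm hk0 (Finset.mem_range.mp hk)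
      linarith
  have chain : 2 * (1 - Real.cos (2 * π / m)) * (m * ∑ j ∈ range m, (y j) ^ 2) ≤
      m * ∑ j ∈ range m, (y (j + 1) - y j) ^ 2 := by
    rw [← hP1, ← hP2, Finset.mul_sum]
    calc ∑ k ∈ range m, 2 * (1 - Real.cos (2 * π / m)) * Complex.normSq (ft m y k)
        ≤ ∑ k ∈ range m, (2 - 2 * Real.cos (2 * π * k / m)) * Complex.normSq (ft m y k) :=
          Finset.sum_le_sum hlow
      _ = ∑ k ∈ range m, Complex.normSq (ft m (fun j => y (j + 1) - y j) k) := by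
          exact (Finset.sum_congr rfl fun k _ => (hz k).symm)
  have hm' : (0:ℝ) < m := by exact_mod_cast hm
  have h2 : (m:ℝ) * (2 * (1 - Real.cos (2 * π / m)) * ∑ j ∈ range m, (y j) ^ 2) ≤
      (m:ℝ) * ∑ j ∈ range m, (y (j + 1) - y j) ^ 2 := by linarith [chain]
  exact le_of_mul_le_mul_left h2 hm'

lemma path_wirtinger (n : ℕ) (hn : 2 ≤ n) (x : ℕ → ℝ) (h0 : ∑ j ∈ range n, x j = 0) :
    2 * (1 - Real.cos (π / n)) * ∑ j ∈ range n, (x j) ^ 2 ≤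
      ∑ i ∈ range (n - 1), (x (i + 1) - x i) ^ 2 := by
  classical
  set y : ℕ → ℝ := fun j => if j % (2 * n) < n then x (j % (2 * n)) else x (2 * n - 1 - j % (2 * n))
    with hy
  have hn0 : 0 < n := by omega
  have h2n : 0 < 2 * n := by omega
  have hyl : ∀ j, j < n → y j = x j := by
    intro j hj
    have hmod : j % (2 * n) = j := Nat.mod_eq_of_lt (by omega)
    simp only [hy, hmod, if_pos hj]
  have hyr : ∀ j, n ≤ j → j < 2 * n → y j = x (2 * n - 1 - j) := by
    intro j hj1 hj2
    have hmod : j % (2 * n) = j := Nat.mod_eq_of_lt hj2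
    simp only [hy]
    rw [hmod, if_neg (by omega : ¬ j < n)]
  have hper : ∀ j, y (j + 2 * n) = y j := by
    intro j
    simp only [hy, Nat.add_mod_right]
  have S0 : ∑ j ∈ range (2 * n), y j = 0 := by
    rw [two_mul, Finset.sum_range_add]
    have A : ∑ j ∈ range n, y j = ∑ j ∈ range n, x j :=
      Finset.sum_congr rfl fun j hj => hyl j (Finset.mem_range.mp hj)
    have B : ∑ j ∈ range n, y (n + j) = ∑ j ∈ range n, x j := by
      have B1 : ∑ j ∈ range n, y (n + j) = ∑ j ∈ range n, x (n - 1 - j) := by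
        refine Finset.sum_congr rfl fun j hj => ?_
        have hj' := Finset.mem_range.mp hj
        rw [hyr (n + j) (by omega) (by omega)]
        congr 1
        omega
      rw [B1, Finset.sum_range_reflect]
    rw [A, B, h0]
    ring
  have S2 : ∑ j ∈ range (2 * n), (y j) ^ 2 = 2 * ∑ j ∈ range n, (x j) ^ 2 := by
    rw [two_mul, Finset.sum_range_add]
    have A : ∑ j ∈ range n, (y j) ^ 2 = ∑ j ∈ range n, (x j) ^ 2 :=
      Finset.sum_congr rfl fun j hj => by rw [hyl j (Finset.mem_range.mp hj)]
    have B : ∑ j ∈ range n, (y (n + j)) ^ 2 = ∑ j ∈ range n, (x j) ^ 2 := by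
      have B1 : ∑ j ∈ range n, (y (n + j)) ^ 2 = ∑ j ∈ range n, (x (n - 1 - j)) ^ 2 := by
        refine Finset.sum_congr rfl fun j hj => ?_
        have hj' := Finset.mem_range.mp hj
        rw [hyr (n + j) (by omega) (by omega)]
        congr 2
        omega
      rw [B1, Finset.sum_range_reflect (fun j => (x j) ^ 2)]
    rw [A, B]
    ring
  have S3 : ∑ j ∈ range (2 * n), (y (j + 1) - y j) ^ 2 =
      2 * ∑ i ∈ range (n - 1), (x (i + 1) - x i) ^ 2 := by
    rw [two_mul, Finset.sum_range_add]
    have A : ∑ j ∈ range n, (y (j + 1) - y j) ^ 2 =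
        ∑ i ∈ range (n - 1), (x (i + 1) - x i) ^ 2 := by
      rw [show n = (n - 1) + 1 by omega, Finset.sum_range_succ]
      have hlast : (y ((n - 1) + 1) - y (n - 1)) ^ 2 = 0 := by
        rw [show (n - 1) + 1 = n by omega, hyr n (le_refl n) (by omega),
          hyl (n - 1) (by omega), show 2 * n - 1 - n = n - 1 by omega]
        ring
      rw [hlast, add_zero]
      refine Finset.sum_congr rfl fun j hj => ?_
      have hj' := Finset.mem_range.mp hj
      rw [hyl (j + 1) (by omega), hyl j (by omega)]
    have B : ∑ j ∈ range n, (y (n + j + 1) - y (n + j)) ^ 2 =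
        ∑ i ∈ range (n - 1), (x (i + 1) - x i) ^ 2 := by
      rw [show n = (n - 1) + 1 by omega, Finset.sum_range_succ]
      rw [show (n - 1) + 1 = n by omega]
      have hlast : (y (n + (n - 1) + 1) - y (n + (n - 1))) ^ 2 = 0 := by
        have h1 : n + (n - 1) + 1 = 0 + 2 * n := by omega
        rw [h1, hper 0, hyl 0 (by omega), hyr (n + (n - 1)) (by omega) (by omega),
          show 2 * n - 1 - (n + (n - 1)) = 0 by omega]
        ring
      rw [hlast, add_zero]
      have B1 : ∑ j ∈ range (n - 1), (y (n + j + 1) - y (n + j)) ^ 2 =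
          ∑ j ∈ range (n - 1), (x ((n - 2 - j) + 1) - x (n - 2 - j)) ^ 2 := by
        refine Finset.sum_congr rfl fun j hj => ?_
        have hj' := Finset.mem_range.mp hj
        rw [hyr (n + j + 1) (by omega) (by omega), hyr (n + j) (by omega) (by omega),
          show 2 * n - 1 - (n + j + 1) = n - 2 - j by omega,
          show 2 * n - 1 - (n + j) = (n - 2 - j) + 1 by omega]
        ring
      rw [B1]
      have := Finset.sum_range_reflect (fun i => (x (i + 1) - x i) ^ 2) (n - 1)
      rw [← this]
      refine Finset.sum_congr rfl fun j hj => ?_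
      congr 2 <;> omega
    rw [A, B]
    ring
  have hkey := cycle_wirtinger (2 * n) h2n y hper S0
  rw [S2, S3] at hkey
  have hcos : 2 * π / ((2 * n : ℕ) : ℝ) = π / n := by
    have : ((n:ℝ)) ≠ 0 := by positivity
    push_cast
    field_simp
  rw [hcos] at hkey
  linarith

/-- The sorted version of `f` as a function on `ℕ`. -/
noncomputable def gf {V : ℕ} (f : Fin V → ℝ) : ℕ → ℝ :=
  fun j => if h : j < V then f (Tuple.sort f ⟨j, h⟩) else 0

/-- The position of a vertex in the sorted order. -/
noncomputable def posf {V : ℕ} (f : Fin V → ℝ) : Fin V → ℕ :=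
  fun v => (((Tuple.sort f).symm v : Fin V) : ℕ)

/-- The edge `e` crosses the cut at level `i` of the sorted order. -/
def crossf {V : ℕ} (f : Fin V → ℝ) (i : ℕ) (e : Sym2 (Fin V)) : Prop :=
  ∃ u v, e = s(u, v) ∧ posf f u ≤ i ∧ ¬ (posf f v ≤ i)

lemma posf_lt {V : ℕ} (f : Fin V → ℝ) (v : Fin V) : posf f v < V :=
  (((Tuple.sort f).symm v)).isLt

lemma gf_posf {V : ℕ} (f : Fin V → ℝ) (v : Fin V) : gf f (posf f v) = f v := by
  unfold gf posf
  rw [dif_pos ((((Tuple.sort f)).symm v)).isLt]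
  congr 1
  have h1 : (⟨((((Tuple.sort f)).symm v : Fin V) : ℕ), (((Tuple.sort f)).symm v).isLt⟩ : Fin V) =
      (Tuple.sort f).symm v := Fin.ext rfl
  rw [h1, Equiv.apply_symm_apply]

lemma gf_mono {V : ℕ} (f : Fin V → ℝ) (a b : ℕ) (hab : a ≤ b) (hb : b < V) :
    gf f a ≤ gf f b := by
  unfold gf
  rw [dif_pos (lt_of_le_of_lt hab hb), dif_pos hb]
  exact Tuple.monotone_sort f (show (⟨a, _⟩ : Fin V) ≤ ⟨b, _⟩ from hab)

lemma posf_inj {V : ℕ} (f : Fin V → ℝ) {u v : Fin V} (h : posf f u = posf f v) : u = v := by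
  unfold posf at h
  exact (Tuple.sort f).symm.injective (Fin.ext h)

end FiedlerAux

/-- The smallest nonzero eigenvalue of the normalized Laplacian of a finite connected
simple graph, defined variationally. -/
noncomputable def alpha1 {V : Type*} [Fintype V] (G : SimpleGraph V) : ℝ :=
  sInf {r | ∃ f : V → ℝ, f ≠ 0 ∧ (∑ v, f v * (G.degree v : ℝ)) = 0 ∧
    r = (∑ e ∈ G.edgeFinset,
        Sym2.lift ⟨fun u v => |f u - f v| ^ 2,
          fun u v => by dsimp only; rw [abs_sub_comm]⟩ e) /
      (∑ v, |f v| ^ 2 * (G.degree v : ℝ))}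

namespace FiedlerAux

/-- Any edge cut induced by a vertex predicate has at least `edgeConnectivity` edges. -/
lemma edgeConnectivity_le_cross {n : ℕ} (G : SimpleGraph (Fin n)) (p : Fin n → Prop)
    (a b : Fin n) (ha : p a) (hb : ¬ p b) (q : Sym2 (Fin n) → Prop) [DecidablePred q]
    (hq : ∀ u v : Fin n, G.Adj u v → p u → ¬ p v → q s(u, v)) :
    edgeConnectivity G ≤ (G.edgeFinset.filter q).card := by
  classical
  apply Nat.sInf_le
  refine ⟨G.edgeFinset.filter q, ?_, rfl, ?_⟩
  · intro e he
    rw [Finset.mem_coe, Finset.mem_filter] at he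
    exact (SimpleGraph.mem_edgeFinset).mp he.1
  · intro hconn
    set S := G.edgeFinset.filter q with hS
    have hadj : ∀ u v : Fin n, (G.deleteEdges ↑S).Adj u v → (p u ↔ p v) := by
      intro u v huv
      rw [SimpleGraph.deleteEdges_adj] at huv
      obtain ⟨hadjuv, hmem⟩ := huv
      have he : s(u, v) ∈ G.edgeFinset := SimpleGraph.mem_edgeFinset.mpr hadjuv
      have he' : s(v, u) ∈ G.edgeFinset := by rwa [Sym2.eq_swap]
      have h1 : ¬ (p u ∧ ¬ p v) := by
        intro hc
        exact hmem (Finset.mem_coe.mpr (Finset.mem_filter.mpr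
          ⟨he, hq u v hadjuv hc.1 hc.2⟩))
      have h2 : ¬ (p v ∧ ¬ p u) := by
        intro hc
        have : q s(v, u) := hq v u hadjuv.symm hc.1 hc.2
        rw [Sym2.eq_swap] at this
        exact hmem (Finset.mem_coe.mpr (Finset.mem_filter.mpr ⟨he, this⟩))
      tauto
    have hreach : ∀ u v : Fin n, (G.deleteEdges ↑S).Reachable u v → (p u ↔ p v) := by
      intro u v h
      obtain ⟨w⟩ := h
      induction w with
      | nil => exact Iff.rfl
      | cons h' _ ih => exact (hadj _ _ h').trans ih
    exact hb ((hreach a b (hconn.preconnected a b)).mp ha)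

lemma edge_lb {V : ℕ} (hV : 2 ≤ V) (G : SimpleGraph (Fin V)) (f : Fin V → ℝ)
    (e : Sym2 (Fin V)) (he : e ∈ G.edgeFinset) :
    (∑ i ∈ range (V - 1), if crossf f i e then (gf f (i + 1) - gf f i) ^ 2 else 0) ≤
      Sym2.lift ⟨fun u v => |f u - f v| ^ 2,
        fun u v => by dsimp only; rw [abs_sub_comm]⟩ e := by
  classical
  induction e using Sym2.ind with
  | _ u v =>
    have hadjuv : G.Adj u v := SimpleGraph.mem_edgeFinset.mp he
    have hne : u ≠ v := hadjuv.ne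
    rw [Sym2.lift_mk]
    have hppne : posf f u ≠ posf f v := fun h => hne (posf_inj f h)
    suffices H : ∀ a b : Fin V, posf f a < posf f b →
        (∑ i ∈ range (V - 1), if crossf f i s(a, b) then (gf f (i + 1) - gf f i) ^ 2 else 0) ≤
          |f a - f b| ^ 2 by
      rcases lt_or_gt_of_ne hppne with h | h
      · exact H u v h
      · have := H v u h
        rw [show s(v, u) = s(u, v) from Sym2.eq_swap, abs_sub_comm (f v) (f u)] at this
        exact this
    intro a b hab
    have hbV : posf f b < V := posf_lt f b
    have hform : ∀ i, crossf f i s(a, b) ↔ i ∈ Finset.Ico (posf f a) (posf f b) := by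
      intro i
      rw [Finset.mem_Ico]
      constructor
      · rintro ⟨u', v', heq, h1, h2⟩
        rcases Sym2.eq_iff.mp heq with ⟨h3, h4⟩ | ⟨h3, h4⟩ <;> subst h3 <;> subst h4 <;> omega
      · intro h
        exact ⟨a, b, rfl, h.1, by omega⟩
    calc ∑ i ∈ range (V - 1), (if crossf f i s(a, b) then (gf f (i + 1) - gf f i) ^ 2 else 0)
        = ∑ i ∈ range (V - 1),
            (if i ∈ Finset.Ico (posf f a) (posf f b) then (gf f (i + 1) - gf f i) ^ 2 else 0) :=
          Finset.sum_congr rfl fun i _ => if_congr (hform i) rfl rfl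
      _ = ∑ i ∈ range (V - 1) ∩ Finset.Ico (posf f a) (posf f b),
            (gf f (i + 1) - gf f i) ^ 2 := Finset.sum_ite_mem _ _ _
      _ = ∑ i ∈ Finset.Ico (posf f a) (posf f b), (gf f (i + 1) - gf f i) ^ 2 := by
          congr 1
          apply Finset.inter_eq_right.mpr
          intro i hi
          rw [Finset.mem_Ico] at hi
          rw [Finset.mem_range]
          omega
      _ ≤ (∑ i ∈ Finset.Ico (posf f a) (posf f b), (gf f (i + 1) - gf f i)) ^ 2 := by
          apply Finset.sum_sq_le_sq_sum_of_nonneg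
          intro i hi
          rw [Finset.mem_Ico] at hi
          have := gf_mono f i (i + 1) (by omega) (by omega)
          linarith
      _ = (gf f (posf f b) - gf f (posf f a)) ^ 2 := by
          rw [Finset.sum_Ico_eq_sum_range]
          have h2 := Finset.sum_range_sub (fun j => gf f (posf f a + j)) (posf f b - posf f a)
          rw [show posf f a + (posf f b - posf f a) = posf f b by omega, Nat.add_zero] at h2
          rw [show (∑ i ∈ range (posf f b - posf f a),
            (gf f (posf f a + i + 1) - gf f (posf f a + i))) = gf f (posf f b) - gf f (posf f a)
            from h2]
      _ = |f a - f b| ^ 2 := by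
          rw [gf_posf f a, gf_posf f b, sq_abs]
          ring

lemma numerator_lb {V : ℕ} (hV : 2 ≤ V) (G : SimpleGraph (Fin V)) (hG : G.Connected)
    (f : Fin V → ℝ) :
    ∑ i ∈ range (V - 1), (edgeConnectivity G : ℝ) * (gf f (i + 1) - gf f i) ^ 2 ≤
      ∑ e ∈ G.edgeFinset, Sym2.lift ⟨fun u v => |f u - f v| ^ 2,
        fun u v => by dsimp only; rw [abs_sub_comm]⟩ e := by
  classical
  have hcnt : ∀ i, i < V - 1 →
      edgeConnectivity G ≤ (G.edgeFinset.filter (fun e => crossf f i e)).card := by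
    intro i hi
    apply edgeConnectivity_le_cross G (fun v => posf f v ≤ i)
      (Tuple.sort f ⟨0, by omega⟩) (Tuple.sort f ⟨V - 1, by omega⟩) ?_ ?_
      (fun e => crossf f i e) (fun u v _ h1 h2 => ⟨u, v, rfl, h1, h2⟩)
    · show posf f (Tuple.sort f ⟨0, by omega⟩) ≤ i
      unfold posf
      rw [Equiv.symm_apply_apply]
      exact Nat.zero_le i
    · show ¬ posf f (Tuple.sort f ⟨V - 1, by omega⟩) ≤ i
      unfold posf
      rw [Equiv.symm_apply_apply]
      show ¬ (V - 1 ≤ i)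
      omega
  calc ∑ i ∈ range (V - 1), (edgeConnectivity G : ℝ) * (gf f (i + 1) - gf f i) ^ 2
      ≤ ∑ i ∈ range (V - 1),
          ((G.edgeFinset.filter (fun e => crossf f i e)).card : ℝ) *
            (gf f (i + 1) - gf f i) ^ 2 := by
        apply Finset.sum_le_sum
        intro i hi
        apply mul_le_mul_of_nonneg_right _ (sq_nonneg _)
        exact_mod_cast hcnt i (Finset.mem_range.mp hi)
    _ = ∑ i ∈ range (V - 1), ∑ e ∈ G.edgeFinset,
          (if crossf f i e then (gf f (i + 1) - gf f i) ^ 2 else 0) := by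
        refine Finset.sum_congr rfl fun i _ => ?_
        rw [← Finset.sum_filter, Finset.sum_const, nsmul_eq_mul]
    _ = ∑ e ∈ G.edgeFinset, ∑ i ∈ range (V - 1),
          (if crossf f i e then (gf f (i + 1) - gf f i) ^ 2 else 0) := Finset.sum_comm
    _ ≤ _ := Finset.sum_le_sum fun e he => edge_lb hV G f e he

lemma degree_pos_of_connected {n : ℕ} (hn : 2 ≤ n) (G : SimpleGraph (Fin n))
    (hG : G.Connected) (v : Fin n) : 0 < G.degree v := by
  classical
  rw [SimpleGraph.degree_pos_iff_exists_adj]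
  have : Nontrivial (Fin n) := Fin.nontrivial_iff_two_le.mpr hn
  obtain ⟨w, hw⟩ := exists_ne v
  obtain ⟨walk⟩ := hG.preconnected v w
  cases walk with
  | nil => exact absurd rfl hw.symm
  | cons h _ => exact ⟨_, h⟩

end FiedlerAux

theorem alpha1_fiedler_lower_bound {V : ℕ} (hV : 2 ≤ V) (G : SimpleGraph (Fin V))
    (hG : G.Connected) :
    alpha1 G ≥ 2 * (edgeConnectivity G : ℝ) / (G.maxDegree : ℝ) *
      (1 - Real.cos (π / V)) := by
  classical
  have hdeg : ∀ v, 0 < G.degree v := FiedlerAux.degree_pos_of_connected hV G hG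
  have hΔ : 0 < G.maxDegree :=
    lt_of_lt_of_le (hdeg ⟨0, by omega⟩) (G.degree_le_maxDegree _)
  have hΔ' : (0:ℝ) < (G.maxDegree : ℝ) := by exact_mod_cast hΔ
  have hcos1 : Real.cos (π / V) ≤ 1 := Real.cos_le_one _
  have hcos0 : (0:ℝ) ≤ 1 - Real.cos (π / V) := by linarith
  have hη0 : (0:ℝ) ≤ (edgeConnectivity G : ℝ) := Nat.cast_nonneg _
  rw [ge_iff_le, alpha1]
  apply le_csInf
  · -- the set is nonempty
    have h01 : (⟨0, by omega⟩ : Fin V) ≠ ⟨1, by omega⟩ := by simp [Fin.ext_iff]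
    set v0 : Fin V := ⟨0, by omega⟩ with hv0
    set v1 : Fin V := ⟨1, by omega⟩ with hv1
    set f : Fin V → ℝ := fun v =>
      if v = v0 then (G.degree v1 : ℝ) else if v = v1 then -(G.degree v0 : ℝ) else 0 with hf
    have hfv0 : f v0 = (G.degree v1 : ℝ) := by rw [hf]; simp
    have hfv1 : f v1 = -(G.degree v0 : ℝ) := by
      rw [hf]
      simp [h01.symm]
    have hfother : ∀ w : Fin V, w ≠ v0 → w ≠ v1 → f w = 0 := by
      intro w hw0 hw1
      rw [hf]
      simp only [if_neg hw0, if_neg hw1]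
    refine ⟨_, f, ?_, ?_, rfl⟩
    · intro h
      have hpos : (0:ℝ) < (G.degree v1 : ℝ) := by exact_mod_cast hdeg v1
      rw [h, Pi.zero_apply] at hfv0
      rw [← hfv0] at hpos
      exact lt_irrefl _ hpos
    · rw [Finset.sum_eq_add v0 v1 h01 ?_ ?_ ?_]
      · rw [hfv0, hfv1]
        ring
      · intro w _ hw
        rw [hfother w hw.1 hw.2]
        ring
      · intro h
        exact absurd (Finset.mem_univ v0) h
      · intro h
        exact absurd (Finset.mem_univ v1) h
  · rintro r ⟨f, hf0, hortho, rfl⟩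
    have hD : (0:ℝ) < ∑ v, |f v| ^ 2 * (G.degree v : ℝ) := by
      obtain ⟨v, hv⟩ := Function.ne_iff.mp hf0
      have hv' : f v ≠ 0 := by simpa using hv
      have h1 : (0:ℝ) < |f v| ^ 2 := pow_pos (abs_pos.mpr hv') 2
      have h2 : (0:ℝ) < (G.degree v : ℝ) := by exact_mod_cast hdeg v
      exact Finset.sum_pos' (fun w _ => by positivity)
        ⟨v, Finset.mem_univ v, mul_pos h1 h2⟩
    rw [le_div_iff₀ hD]
    -- notation
    set g : ℕ → ℝ := FiedlerAux.gf f with hg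
    set c : ℝ := (∑ j ∈ range V, g j) / V with hc
    have hV0 : ((V:ℝ)) ≠ 0 := by positivity
    have hx0 : ∑ j ∈ range V, (g j - c) = 0 := by
      rw [Finset.sum_sub_distrib, Finset.sum_const, Finset.card_range, hc, nsmul_eq_mul]
      field_simp
      ring
    have hwir := FiedlerAux.path_wirtinger V hV (fun j => g j - c) hx0
    have hgap : ∑ i ∈ range (V - 1), ((fun j => g j - c) (i + 1) - (fun j => g j - c) i) ^ 2 =
        ∑ i ∈ range (V - 1), (g (i + 1) - g i) ^ 2 := by
      refine Finset.sum_congr rfl fun i _ => ?_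
      show ((g (i + 1) - c) - (g i - c)) ^ 2 = (g (i + 1) - g i) ^ 2
      ring
    rw [hgap] at hwir
    -- reindexing
    have hsum_eq : ∑ j ∈ range V, (g j - c) ^ 2 = ∑ v : Fin V, (f v - c) ^ 2 := by
      rw [← Fin.sum_univ_eq_sum_range (fun j => (g j - c) ^ 2) V]
      rw [← Equiv.sum_comp (Tuple.sort f) (fun v => (f v - c) ^ 2)]
      refine Finset.sum_congr rfl fun j _ => ?_
      have : g (j : ℕ) = f (Tuple.sort f j) := by
        rw [hg]
        unfold FiedlerAux.gf
        rw [dif_pos j.isLt]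
      rw [this]
    -- denominator bound
    have hDb : ∑ v, |f v| ^ 2 * (G.degree v : ℝ) ≤
        (G.maxDegree : ℝ) * ∑ v : Fin V, (f v - c) ^ 2 := by
      have h1 : ∑ v, |f v| ^ 2 * (G.degree v : ℝ) ≤
          ∑ v, (f v - c) ^ 2 * (G.degree v : ℝ) := by
        have hexp : ∀ v : Fin V, (f v - c) ^ 2 * (G.degree v : ℝ) =
            |f v| ^ 2 * (G.degree v : ℝ) - 2 * c * (f v * (G.degree v : ℝ)) +
              c ^ 2 * (G.degree v : ℝ) := by
          intro v
          rw [sq_abs]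
          ring
        rw [Finset.sum_congr rfl fun v _ => hexp v]
        rw [Finset.sum_add_distrib, Finset.sum_sub_distrib, ← Finset.mul_sum, ← Finset.mul_sum,
          hortho]
        have h3 : (0:ℝ) ≤ c ^ 2 * ∑ v, (G.degree v : ℝ) := by positivity
        linarith
      have h2 : ∑ v, (f v - c) ^ 2 * (G.degree v : ℝ) ≤
          ∑ v, (f v - c) ^ 2 * (G.maxDegree : ℝ) := by
        apply Finset.sum_le_sum
        intro v _
        apply mul_le_mul_of_nonneg_left _ (sq_nonneg _)
        exact_mod_cast G.degree_le_maxDegree v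
      calc ∑ v, |f v| ^ 2 * (G.degree v : ℝ) ≤ ∑ v, (f v - c) ^ 2 * (G.degree v : ℝ) := h1
        _ ≤ ∑ v, (f v - c) ^ 2 * (G.maxDegree : ℝ) := h2
        _ = (G.maxDegree : ℝ) * ∑ v : Fin V, (f v - c) ^ 2 := by
            rw [← Finset.sum_mul]
            ring
    have hS : (∑ v, |f v| ^ 2 * (G.degree v : ℝ)) / (G.maxDegree : ℝ) ≤
        ∑ v : Fin V, (f v - c) ^ 2 := by
      rw [div_le_iff₀ hΔ']
      calc ∑ v, |f v| ^ 2 * (G.degree v : ℝ)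
          ≤ (G.maxDegree : ℝ) * ∑ v : Fin V, (f v - c) ^ 2 := hDb
        _ = (∑ v : Fin V, (f v - c) ^ 2) * (G.maxDegree : ℝ) := by ring
    have hnum := FiedlerAux.numerator_lb hV G hG f
    calc 2 * (edgeConnectivity G : ℝ) / (G.maxDegree : ℝ) * (1 - Real.cos (π / V)) *
          (∑ v, |f v| ^ 2 * (G.degree v : ℝ))
        = (edgeConnectivity G : ℝ) * (2 * (1 - Real.cos (π / V)) *
            ((∑ v, |f v| ^ 2 * (G.degree v : ℝ)) / (G.maxDegree : ℝ))) := by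
          field_simp
      _ ≤ (edgeConnectivity G : ℝ) * (2 * (1 - Real.cos (π / V)) *
            ∑ v : Fin V, (f v - c) ^ 2) := by
          apply mul_le_mul_of_nonneg_left _ hη0
          apply mul_le_mul_of_nonneg_left hS
          linarith
      _ = (edgeConnectivity G : ℝ) * (2 * (1 - Real.cos (π / V)) *
            ∑ j ∈ range V, (g j - c) ^ 2) := by rw [hsum_eq]
      _ ≤ (edgeConnectivity G : ℝ) * ∑ i ∈ range (V - 1), (g (i + 1) - g i) ^ 2 :=
          mul_le_mul_of_nonneg_left hwir hη0
      _ = ∑ i ∈ range (V - 1), (edgeConnectivity G : ℝ) *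
            (FiedlerAux.gf f (i + 1) - FiedlerAux.gf f i) ^ 2 := by
          rw [Finset.mul_sum, hg]
      _ ≤ _ := hnum
end

section
/- Let G be a finite connected simple graph on V ≥ 2 vertices with E edges which is not a cycle graph, and let V* denote the number of vertices of G of degree at least 2. Then for every integer k with 2 ≤ k ≤ V and 2k − V − V* − 1 + E ≤ 0, the eigenvalues of the normalized Laplacian satisfy α_{k−1}(G) ≤ 1 − cos((2k + 3E − V − V* − 1)π/(2E)). -/
open scoped Classical
open Real Finset

/-- The normalized Laplacian matrix `I - D^{-1/2} A D^{-1/2}` of a finite simple graph. -/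
noncomputable def normLapMatrix {n : ℕ} (G : SimpleGraph (Fin n)) :
    Matrix (Fin n) (Fin n) ℝ :=
  1 - Matrix.diagonal (fun v => (Real.sqrt (G.degree v))⁻¹) * G.adjMatrix ℝ *
    Matrix.diagonal (fun v => (Real.sqrt (G.degree v))⁻¹)

lemma eCard {γ : Type} (G : SimpleGraph γ) [Fintype ↥G.edgeSet] :
    G.edgeSet.ncard = G.edgeFinset.card :=
  Set.ncard_eq_toFinset_card' _

lemma walk_transfer {β : Type} (G : SimpleGraph β) (s : Set β) {x y : β} (p : G.Walk x y)
    (hsup : ∀ z ∈ p.support, z ∈ s) (hx : x ∈ s) (hy : y ∈ s) :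
    (G.induce s).Reachable ⟨x, hx⟩ ⟨y, hy⟩ := by
  induction p with
  | nil => exact SimpleGraph.Reachable.refl _
  | @cons a b c h q ih =>
      have hb : b ∈ s := hsup b (by simp [SimpleGraph.Walk.support_cons])
      have h1 : (G.induce s).Adj ⟨a, hx⟩ ⟨b, hb⟩ := by
        simp [SimpleGraph.comap_adj, h]
      exact h1.reachable.trans (ih (fun z hz => hsup z (by simp [SimpleGraph.Walk.support_cons, hz])) hb hy)

lemma exists_nbr_reach {β : Type} (G : SimpleGraph β) (s : Set β) :
    ∀ {x u : β} (_ : G.Walk x u) (_ : u ∉ s)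
      (_ : ∀ z, z ∉ s → z ≠ u → ∀ w, G.Adj z w → w = u) (hx : x ∈ s),
      ∃ w, ∃ hw : w ∈ s, G.Adj u w ∧ (G.induce s).Reachable ⟨x, hx⟩ ⟨w, hw⟩ := by
  intro x u p
  induction p with
  | nil => intro hus _ hx; exact absurd hx hus
  | @cons a b c h q ih =>
      intro hus hout hx
      by_cases hb : b = c
      · subst hb
        exact ⟨a, hx, h.symm, SimpleGraph.Reachable.refl _⟩
      · have hbs : b ∈ s := by
          by_contra hbs
          have := hout b hbs hb a h.symm
          exact hus (this ▸ hx)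
        obtain ⟨w, hw, hadj, hr⟩ := ih hus hout hbs
        have h1 : (G.induce s).Adj ⟨a, hx⟩ ⟨b, hbs⟩ := by simp [SimpleGraph.comap_adj, h]
        exact ⟨w, hw, hadj, h1.reachable.trans hr⟩






lemma edge_split {β : Type} [Fintype β] (G : SimpleGraph β) (s : Set β) (u : β) (hus : u ∉ s)
    (hout : ∀ z, z ∉ s → z ≠ u → ∀ w, G.Adj z w → w = u) :
    (G.induce s).edgeSet.ncard + G.degree u = G.edgeSet.ncard := by
  classical
  rw [eCard, eCard]
  have himg : (G.induce s).edgeFinset.image (Sym2.map (Subtype.val : s → β))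
      = G.edgeFinset \ G.incidenceFinset u := by
    ext e
    simp only [Finset.mem_image, Finset.mem_sdiff, SimpleGraph.mem_edgeFinset,
      SimpleGraph.mem_incidenceFinset]
    constructor
    · rintro ⟨e', he', rfl⟩
      induction e' using Sym2.ind with
      | _ a b =>
        rw [SimpleGraph.mem_edgeSet] at he'
        have hadj : G.Adj ↑a ↑b := he'
        refine ⟨by rw [Sym2.map_pair_eq, SimpleGraph.mem_edgeSet]; exact hadj, ?_⟩
        intro hinc
        have hu : u ∈ Sym2.map Subtype.val s(a, b) := hinc.2
        rw [Sym2.map_pair_eq, Sym2.mem_iff] at hu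
        rcases hu with h | h
        · exact hus (h ▸ a.2)
        · exact hus (h ▸ b.2)
    · rintro ⟨he, hni⟩
      induction e using Sym2.ind with
      | _ a b =>
        rw [SimpleGraph.mem_edgeSet] at he
        have hnu : u ∉ s(a, b) := fun hu => hni ⟨he, hu⟩
        rw [Sym2.mem_iff] at hnu
        push_neg at hnu
        have ha : a ∈ s := by
          by_contra has
          exact hnu.2 (hout a has (fun h => hnu.1 h.symm) b he).symm
        have hb : b ∈ s := by
          by_contra hbs
          exact hnu.1 (hout b hbs (fun h => hnu.2 h.symm) a he.symm).symm
        refine ⟨s(⟨a, ha⟩, ⟨b, hb⟩), ?_, by rw [Sym2.map_pair_eq]⟩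
        rw [SimpleGraph.mem_edgeSet]
        exact he
  have hinj : Function.Injective (Sym2.map (Subtype.val : s → β)) :=
    Sym2.map.injective Subtype.val_injective
  have hcard := Finset.card_image_of_injective (G.induce s).edgeFinset hinj
  have hsub : G.incidenceFinset u ⊆ G.edgeFinset := by
    intro e he
    rw [SimpleGraph.mem_incidenceFinset] at he
    rw [SimpleGraph.mem_edgeFinset]
    exact he.1
  have hdeg := SimpleGraph.card_incidenceFinset_eq_degree G u
  have hle := Finset.card_le_card hsub
  rw [himg] at hcard
  rw [Finset.card_sdiff_of_subset hsub] at hcard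
  omega



noncomputable instance {γ : Type} [Fintype γ] (H : SimpleGraph γ) :
    Fintype H.ConnectedComponent := by
  classical
  exact Fintype.ofSurjective H.connectedComponentMk (fun c => ⟨c.out, c.out_eq⟩)

lemma exists_conn_ext {γ : Type} [Fintype γ] [Nonempty γ] (H : SimpleGraph γ) :
    ∃ K : SimpleGraph γ, H ≤ K ∧ K.Connected ∧
      K.edgeSet.ncard + 1 ≤ H.edgeSet.ncard + Nat.card H.ConnectedComponent := by
  classical
  set c₀ := H.connectedComponentMk (Classical.arbitrary γ) with hc₀
  set F : Finset (Sym2 γ) := (Finset.univ.erase c₀).image (fun c => s(c₀.out, c.out)) with hF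
  have hmkout : ∀ c : H.ConnectedComponent, H.connectedComponentMk c.out = c := by
    intro c; exact c.out_eq
  letI instK : Fintype ↥(H ⊔ SimpleGraph.fromEdgeSet (↑F : Set (Sym2 γ))).edgeSet :=
    Fintype.ofFinite _
  refine ⟨H ⊔ SimpleGraph.fromEdgeSet ↑F, le_sup_left, ?_, ?_⟩
  · have key : ∀ x, (H ⊔ SimpleGraph.fromEdgeSet ↑F).Reachable x c₀.out := by
      intro x
      have h1 : H.Reachable x (H.connectedComponentMk x).out :=
        SimpleGraph.ConnectedComponent.exact (hmkout _).symm
      have h1' := h1.mono (le_sup_left : H ≤ H ⊔ SimpleGraph.fromEdgeSet ↑F)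
      by_cases hc : H.connectedComponentMk x = c₀
      · rw [hc] at h1'; exact h1'
      · have hmem : s(c₀.out, (H.connectedComponentMk x).out) ∈ F := by
          rw [hF]
          exact Finset.mem_image.2 ⟨_, Finset.mem_erase.2 ⟨hc, Finset.mem_univ _⟩, rfl⟩
        have hadj : (SimpleGraph.fromEdgeSet (↑F : Set (Sym2 γ))).Adj
            (H.connectedComponentMk x).out c₀.out := by
          rw [SimpleGraph.fromEdgeSet_adj]
          refine ⟨by rw [Sym2.eq_swap]; exact hmem, ?_⟩
          intro h
          exact hc (by rw [← hmkout (H.connectedComponentMk x), h, hmkout])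
        exact h1'.trans ((hadj.reachable).mono (le_sup_right : SimpleGraph.fromEdgeSet ↑F ≤ H ⊔ SimpleGraph.fromEdgeSet ↑F))
    exact ⟨fun x y => (key x).trans (key y).symm⟩
  · rw [eCard, eCard]
    have hsub : (H ⊔ SimpleGraph.fromEdgeSet ↑F).edgeFinset ⊆ H.edgeFinset ∪ F := by
      intro e he
      rw [SimpleGraph.mem_edgeFinset, SimpleGraph.edgeSet_sup] at he
      rcases he with he | he
      · exact Finset.mem_union_left _ (SimpleGraph.mem_edgeFinset.2 he)
      · rw [SimpleGraph.edgeSet_fromEdgeSet] at he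
        exact Finset.mem_union_right _ (Finset.mem_coe.1 he.1)
    have h1 : (H ⊔ SimpleGraph.fromEdgeSet ↑F).edgeFinset.card ≤
        H.edgeFinset.card + F.card :=
      le_trans (Finset.card_le_card hsub) (Finset.card_union_le _ _)
    have h2 : F.card ≤ Fintype.card H.ConnectedComponent - 1 := by
      calc F.card ≤ (Finset.univ.erase c₀).card := Finset.card_image_le
        _ = Fintype.card H.ConnectedComponent - 1 := by
            rw [Finset.card_erase_of_mem (Finset.mem_univ _), Finset.card_univ]
    have hne : Nonempty H.ConnectedComponent := ⟨c₀⟩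
    have h3 : 1 ≤ Nat.card H.ConnectedComponent := Nat.card_pos
    rw [← Nat.card_eq_fintype_card] at h2
    omega

lemma cover_lemma : ∀ (N : ℕ) (β : Type) [Fintype β] (G : SimpleGraph β),
    Nat.card β ≤ N → G.Connected →
    ∃ U : Finset β, (∀ a b, G.Adj a b → a ∈ U ∨ b ∈ U) ∧ 2 * U.card ≤ G.edgeSet.ncard + 1 := by
  intro N
  induction N with
  | zero =>
      intro β _ G hcard hconn
      have : Nonempty β := hconn.nonempty
      have := Nat.card_pos (α := β)
      omega
  | succ n ih =>
      intro β _ G hcard hconn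
      by_cases hE0 : G.edgeSet.ncard = 0
      · refine ⟨∅, ?_, by simp⟩
        intro a b hab
        exfalso
        have hmem : s(a, b) ∈ G.edgeSet := hab
        have h0 : G.edgeSet = ∅ := (Set.ncard_eq_zero (Set.toFinite _)).1 hE0
        rw [h0] at hmem
        exact hmem
      · -- common step
        have step : ∀ (u : β) (s : Set β), u ∉ s →
            (∀ z, z ∉ s → z ≠ u → ∀ w, G.Adj z w → w = u) →
            s.Nonempty →
            (Nat.card (G.induce s).ConnectedComponent + 1 ≤ G.degree u) →
            (∀ a b, G.Adj a b → a ≠ u → b ≠ u → a ∈ s ∧ b ∈ s) →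
            (s.ncard + 1 ≤ Nat.card β) →
            ∃ U : Finset β, (∀ a b, G.Adj a b → a ∈ U ∨ b ∈ U) ∧
              2 * U.card ≤ G.edgeSet.ncard + 1 := by
          intro u s hus hout hsne hcc hcov hcards
          haveI : Nonempty ↥s := hsne.to_subtype
          obtain ⟨K, hHK, hKconn, hKcard⟩ := exists_conn_ext (G.induce s)
          obtain ⟨U', hU'cov, hU'card⟩ := ih ↥s K (by rw [Nat.card_coe_set_eq]; omega) hKconn
          have hsplit := edge_split G s u hus hout
          refine ⟨insert u (U'.image Subtype.val), ?_, ?_⟩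
          · intro a b hab
            by_cases hau : a = u
            · exact Or.inl (hau ▸ Finset.mem_insert_self _ _)
            by_cases hbu : b = u
            · exact Or.inr (hbu ▸ Finset.mem_insert_self _ _)
            obtain ⟨ha, hb⟩ := hcov a b hab hau hbu
            have hadjK : K.Adj ⟨a, ha⟩ ⟨b, hb⟩ := hHK hab
            rcases hU'cov _ _ hadjK with h | h
            · exact Or.inl (Finset.mem_insert_of_mem (Finset.mem_image_of_mem _ h))
            · exact Or.inr (Finset.mem_insert_of_mem (Finset.mem_image_of_mem _ h))
          · have hc1 : (insert u (U'.image Subtype.val)).card ≤ U'.card + 1 := by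
              calc (insert u (U'.image Subtype.val)).card
                  ≤ (U'.image Subtype.val).card + 1 := Finset.card_insert_le _ _
                _ ≤ U'.card + 1 := by
                    exact Nat.add_le_add_right Finset.card_image_le 1
            omega
        -- G has at least one edge
        have hconn' := hconn.preconnected
        have memN : ∀ (x w : β), w ∈ G.neighborFinset x ↔ G.Adj x w :=
          fun x w => SimpleGraph.mem_neighborFinset _ _ _
        by_cases hpend : ∃ v, G.degree v = 1
        · -- pendant case
          obtain ⟨v, hv⟩ := hpend
          obtain ⟨u, hu⟩ := Finset.card_eq_one.1
            ((SimpleGraph.card_neighborFinset_eq_degree G v).trans hv)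
          have hadj_vu : G.Adj v u := by
            rw [← SimpleGraph.mem_neighborFinset, hu]; exact Finset.mem_singleton_self _
          have houtv : ∀ w, G.Adj v w → w = u := by
            intro w hw
            have : w ∈ G.neighborFinset v := (memN _ _).2 hw
            rw [hu] at this
            exact Finset.mem_singleton.1 this
          have hvu : v ≠ u := hadj_vu.ne
          by_cases hdu : G.degree u ≤ 1
          · -- G is just the edge uv
            have hNu : G.neighborFinset u = {v} := by
              have hvmem : v ∈ G.neighborFinset u := (memN _ _).2 hadj_vu.symm
              have hc : (G.neighborFinset u).card ≤ 1 := by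
                rw [SimpleGraph.card_neighborFinset_eq_degree]; exact hdu
              have := Finset.eq_of_subset_of_card_le (Finset.singleton_subset_iff.2 hvmem) hc
              exact this.symm
            have hverts : ∀ z, z = u ∨ z = v := by
              intro z
              by_contra hz
              push_neg at hz
              obtain ⟨hz1, hz2⟩ := hz
              have hzs : z ∈ {x : β | x ≠ u ∧ x ≠ v} := ⟨hz1, hz2⟩
              obtain ⟨p⟩ := hconn' z u
              obtain ⟨w, hw, hadjuw, _⟩ := exists_nbr_reach G {x : β | x ≠ u ∧ x ≠ v} p
                (by simp) (by
                  intro z' hz' hz'u w' hw'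
                  have : z' = v := by
                    simp only [Set.mem_setOf_eq, not_and_or, not_not] at hz'
                    tauto
                  subst this
                  exact houtv w' hw') hzs
              have : w ∈ G.neighborFinset u := (memN _ _).2 hadjuw
              rw [hNu] at this
              exact hw.2 (Finset.mem_singleton.1 this)
            refine ⟨{u}, ?_, ?_⟩
            · intro a b hab
              rcases hverts a with ha | ha
              · exact Or.inl (ha ▸ Finset.mem_singleton_self _)
              · subst ha
                exact Or.inr ((houtv b hab) ▸ Finset.mem_singleton_self _)
            · have hE1 : 1 ≤ G.edgeSet.ncard := by omega
              simp only [Finset.card_singleton]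
              omega
          · -- degree u ≥ 2
            have hdu2 : 2 ≤ G.degree u := by
              have : 0 < G.degree u := by
                rw [SimpleGraph.degree_pos_iff_exists_adj]
                exact ⟨v, hadj_vu.symm⟩
              omega
            set s : Set β := {x : β | x ≠ u ∧ x ≠ v} with hs
            have hus : u ∉ s := by simp [hs]
            have hout : ∀ z, z ∉ s → z ≠ u → ∀ w, G.Adj z w → w = u := by
              intro z hz hzu w hw
              have : z = v := by
                simp only [hs, Set.mem_setOf_eq, not_and_or, not_not] at hz
                tauto
              subst this
              exact houtv w hw
            -- a neighbor of u distinct from v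
            obtain ⟨w0, hw0⟩ : ((G.neighborFinset u).erase v).Nonempty := by
              have : 1 ≤ ((G.neighborFinset u).erase v).card := by
                rw [Finset.card_erase_of_mem ((memN _ _).2 hadj_vu.symm),
                  SimpleGraph.card_neighborFinset_eq_degree]
                omega
              exact Finset.card_pos.1 (by omega)
            have hw0v : w0 ≠ v := (Finset.mem_erase.1 hw0).1
            have hw0adj : G.Adj u w0 := (memN _ _).1 (Finset.mem_erase.1 hw0).2
            have hw0s : w0 ∈ s := ⟨hw0adj.ne', hw0v⟩
            -- surjection from neighbors (erase v) onto components
            have hccle : Nat.card (G.induce s).ConnectedComponent + 1 ≤ G.degree u := by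
              have hsurj : Function.Surjective
                  (fun w : ↥((G.neighborFinset u).erase v) =>
                    (G.induce s).connectedComponentMk
                      ⟨w.1, ⟨((memN _ _).1 (Finset.mem_erase.1 w.2).2).ne',
                        (Finset.mem_erase.1 w.2).1⟩⟩) := by
                intro c
                obtain ⟨p⟩ := hconn' c.out.1 u
                obtain ⟨w, hw, hadjuw, hreach⟩ := exists_nbr_reach G s p hus hout c.out.2
                refine ⟨⟨w, Finset.mem_erase.2 ⟨hw.2, (memN _ _).2 hadjuw⟩⟩, ?_⟩
                exact ((SimpleGraph.ConnectedComponent.sound hreach).symm).trans c.out_eq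
              have hle := Fintype.card_le_of_surjective _ hsurj
              rw [Fintype.card_coe,
                Finset.card_erase_of_mem ((memN _ _).2 hadj_vu.symm),
                SimpleGraph.card_neighborFinset_eq_degree,
                ← Nat.card_eq_fintype_card] at hle
              omega
            refine step u s hus hout ⟨w0, hw0s⟩ hccle ?_ ?_
            · intro a b hab hau hbu
              have ha : a ≠ v := by
                intro h; subst h
                exact hbu (houtv b hab)
              have hb : b ≠ v := by
                intro h; subst h
                exact hau (houtv a hab.symm)
              exact ⟨⟨hau, ha⟩, ⟨hbu, hb⟩⟩
            · have hss : s ⊂ Set.univ := (Set.ssubset_univ_iff).2 (by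
                intro h; rw [h] at hus; exact hus (Set.mem_univ u))
              have := Set.ncard_lt_ncard hss (Set.finite_univ)
              rw [Set.ncard_univ] at this
              omega
        · -- no pendant: minimum degree ≥ 2
          push_neg at hpend
          have hedge : G.edgeSet.Nonempty := by
            rw [← Set.ncard_pos (Set.toFinite _)] at *
            omega
          obtain ⟨e0, he0⟩ := hedge
          have hdeg2 : ∀ x, 2 ≤ G.degree x := by
            intro x
            have h1 : 0 < G.degree x := by
              rw [SimpleGraph.degree_pos_iff_exists_adj]
              induction e0 using Sym2.ind with
              | _ a b =>
                have hab : G.Adj a b := he0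
                have ⟨y, hy⟩ : ∃ y, y ≠ x := by
                  by_cases hax : a = x
                  · exact ⟨b, fun hbx => hab.ne' (hbx.trans hax.symm)⟩
                  · exact ⟨a, hax⟩
                obtain ⟨p⟩ := hconn' x y
                cases p with
                | nil => exact absurd rfl hy
                | cons h q => exact ⟨_, h⟩
            have := hpend x
            omega
          -- longest path
          set P : ℕ → Prop := fun m => ∃ (a b : β) (p : G.Walk a b), p.IsPath ∧ p.length = m with hP
          have hP0 : P 0 := by
            obtain ⟨x⟩ := hconn.nonempty
            exact ⟨x, x, SimpleGraph.Walk.nil, SimpleGraph.Walk.IsPath.nil, rfl⟩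
          set m := Nat.findGreatest P (Fintype.card β) with hm
          have hPm : P m := Nat.findGreatest_spec (Nat.zero_le _) hP0
          have hmax : ∀ mm, P mm → mm ≤ m := by
            intro mm hmm
            obtain ⟨a, b, p, hp, hlen⟩ := hmm
            exact Nat.le_findGreatest (hlen ▸ le_of_lt hp.length_lt) ⟨a, b, p, hp, hlen⟩
          obtain ⟨a, b, p, hp, hlen⟩ := hPm
          have hnb_sup : ∀ w, G.Adj a w → w ∈ p.support := by
            intro w hw
            by_contra hws
            have hcons : (SimpleGraph.Walk.cons hw.symm p).IsPath :=
              (SimpleGraph.Walk.cons_isPath_iff _ _).2 ⟨hp, hws⟩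
            have := hmax (m + 1) ⟨w, b, _, hcons, by simp [hlen]⟩
            omega
          obtain ⟨w₁, hw₁, w₂, hw₂, hw12⟩ := Finset.one_lt_card.1
            (by rw [SimpleGraph.card_neighborFinset_eq_degree]; exact hdeg2 a :
              1 < (G.neighborFinset a).card)
          have hw₁a : G.Adj a w₁ := (memN _ _).1 hw₁
          have hw₂a : G.Adj a w₂ := (memN _ _).1 hw₂
          cases p with
          | nil =>
              exfalso
              have := hnb_sup w₁ hw₁a
              rw [SimpleGraph.Walk.support_nil, List.mem_singleton] at this
              exact hw₁a.ne' this
          | @cons _ c _ h q =>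
              have hpq := (SimpleGraph.Walk.cons_isPath_iff _ _).1 hp
              have ha_nq : a ∉ q.support := hpq.2
              have hsupp : ∀ w, G.Adj a w → w ∈ q.support := by
                intro w hw
                have := hnb_sup w hw
                rw [SimpleGraph.Walk.support_cons, List.mem_cons] at this
                rcases this with h1 | h1
                · exact absurd h1 hw.ne'
                · exact h1
              have hw₁q : w₁ ∈ q.support := hsupp w₁ hw₁a
              have hw₂q : w₂ ∈ q.support := hsupp w₂ hw₂a
              set s : Set β := {x : β | x ≠ a} with hs
              have hus : a ∉ s := by simp [hs]
              have hout : ∀ z, z ∉ s → z ≠ a → ∀ w, G.Adj z w → w = a := by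
                intro z hz hza
                exact absurd (by simpa [hs] using hz) hza
              -- reachability between w₁ and w₂ avoiding a
              have hr : (G.induce s).Reachable ⟨w₁, hw₁a.ne'⟩ ⟨w₂, hw₂a.ne'⟩ := by
                have hsub : ∀ z ∈ (((q.takeUntil w₁ hw₁q).reverse).append
                    (q.takeUntil w₂ hw₂q)).support, z ∈ s := by
                  intro z hz
                  rw [SimpleGraph.Walk.support_append, List.mem_append] at hz
                  have hzq : z ∈ q.support := by
                    rcases hz with h1 | h1
                    · rw [SimpleGraph.Walk.support_reverse, List.mem_reverse] at h1
                      exact SimpleGraph.Walk.support_takeUntil_subset _ _ h1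
                    · exact SimpleGraph.Walk.support_takeUntil_subset _ _ (List.mem_of_mem_tail h1)
                  intro hza
                  rw [hza] at hzq
                  exact ha_nq hzq
                exact walk_transfer G s _ hsub hw₁a.ne' hw₂a.ne'
              have hccle : Nat.card (G.induce s).ConnectedComponent + 1 ≤ G.degree a := by
                have hsurj : Function.Surjective
                    (fun w : ↥(G.neighborFinset a) =>
                      (G.induce s).connectedComponentMk
                        ⟨w.1, ((memN _ _).1 w.2).ne'⟩) := by
                  intro c
                  obtain ⟨p'⟩ := hconn' c.out.1 a
                  obtain ⟨w, hw, hadjuw, hreach⟩ := exists_nbr_reach G s p' hus hout c.out.2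
                  refine ⟨⟨w, (memN _ _).2 hadjuw⟩, ?_⟩
                  exact ((SimpleGraph.ConnectedComponent.sound hreach).symm).trans c.out_eq
                have hninj : ¬ Function.Injective
                    (fun w : ↥(G.neighborFinset a) =>
                      (G.induce s).connectedComponentMk
                        ⟨w.1, ((memN _ _).1 w.2).ne'⟩) := by
                  intro hinj
                  have heq : (G.induce s).connectedComponentMk ⟨w₁, hw₁a.ne'⟩ =
                      (G.induce s).connectedComponentMk ⟨w₂, hw₂a.ne'⟩ :=
                    SimpleGraph.ConnectedComponent.sound hr
                  have := hinj (a₁ := ⟨w₁, hw₁⟩) (a₂ := ⟨w₂, hw₂⟩) heq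
                  exact hw12 (congrArg Subtype.val this)
                have hlt := Fintype.card_lt_of_surjective_not_injective _ hsurj hninj
                rw [Fintype.card_coe, SimpleGraph.card_neighborFinset_eq_degree,
                  ← Nat.card_eq_fintype_card] at hlt
                omega
              refine step a s hus hout ⟨w₁, hw₁a.ne'⟩ hccle ?_ ?_
              · intro x y _ hxa hya
                exact ⟨hxa, hya⟩
              · have hss : s ⊂ Set.univ := (Set.ssubset_univ_iff).2 (by
                  intro h; rw [h] at hus; exact hus (Set.mem_univ a))
                have := Set.ncard_lt_ncard hss (Set.finite_univ)
                rw [Set.ncard_univ] at this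
                omega

lemma conn_card_le : ∀ (N : ℕ) (β : Type) [Fintype β] (G : SimpleGraph β),
    Nat.card β ≤ N → G.Connected → Nat.card β ≤ G.edgeSet.ncard + 1 := by
  intro N
  induction N with
  | zero => intro β _ G hcard _; omega
  | succ n ih =>
      intro β _ G hcard hconn
      by_cases hsmall : Nat.card β ≤ 1
      · omega
      · obtain ⟨u⟩ := hconn.nonempty
        set s : Set β := {x : β | x ≠ u} with hs
        have hus : u ∉ s := by simp [hs]
        have hout : ∀ z, z ∉ s → z ≠ u → ∀ w, G.Adj z w → w = u := by
          intro z hz hzu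
          exact absurd (by simpa [hs] using hz) hzu
        have hsne : s.Nonempty := by
          have h2 : 1 < Fintype.card β := by
            rw [← Nat.card_eq_fintype_card]; omega
          obtain ⟨y, hy⟩ := Fintype.exists_ne_of_one_lt_card h2 u
          exact ⟨y, hy⟩
        haveI : Nonempty ↥s := hsne.to_subtype
        have hccle : Nat.card (G.induce s).ConnectedComponent ≤ G.degree u := by
          have hsurj : Function.Surjective
              (fun w : ↥(G.neighborFinset u) =>
                (G.induce s).connectedComponentMk
                  ⟨w.1, (SimpleGraph.mem_neighborFinset _ _ _ |>.1 w.2).ne'⟩) := by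
            intro c
            obtain ⟨p'⟩ := hconn.preconnected c.out.1 u
            obtain ⟨w, hw, hadjuw, hreach⟩ := exists_nbr_reach G s p' hus hout c.out.2
            refine ⟨⟨w, (SimpleGraph.mem_neighborFinset _ _ _).2 hadjuw⟩, ?_⟩
            exact ((SimpleGraph.ConnectedComponent.sound hreach).symm).trans c.out_eq
          have hle := Fintype.card_le_of_surjective _ hsurj
          rw [Fintype.card_coe, SimpleGraph.card_neighborFinset_eq_degree,
            ← Nat.card_eq_fintype_card] at hle
          exact hle
        obtain ⟨K, hHK, hKconn, hKcard⟩ := exists_conn_ext (G.induce s)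
        have hsplit := edge_split G s u hus hout
        have hncard : s.ncard + 1 = Nat.card β := by
          have hseq : s = Set.univ \ {u} := by
            ext x; simp [hs]
          rw [hseq, Set.ncard_diff_singleton_add_one (Set.mem_univ u) Set.finite_univ,
            Set.ncard_univ]
        have hIH := ih ↥s K (by rw [Nat.card_coe_set_eq]; omega) hKconn
        rw [Nat.card_coe_set_eq] at hIH
        omega


lemma inner_eq_dot {n : ℕ} (x w : EuclideanSpace ℝ (Fin n)) :
    (inner ℝ x w : ℝ) = dotProduct x w := by
  simp [PiLp.inner_apply, dotProduct, RCLike.inner_apply, mul_comm]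

lemma quad_expand {n : ℕ} (M : Matrix (Fin n) (Fin n) ℝ) (hM : M.IsHermitian)
    (y : EuclideanSpace ℝ (Fin n)) :
    dotProduct y (M.mulVec y) =
      ∑ i, hM.eigenvalues i * (hM.eigenvectorBasis.repr y i)^2 ∧
    dotProduct y y = ∑ i, (hM.eigenvectorBasis.repr y i)^2 := by
  set b := hM.eigenvectorBasis with hb
  set c : Fin n → ℝ := fun i => b.repr y i with hc
  have hyc : y = ∑ i, c i • (b i : EuclideanSpace ℝ (Fin n)) := (b.sum_repr y).symm
  have hMb : ∀ i, M.mulVec (b i) = hM.eigenvalues i • (b i : EuclideanSpace ℝ (Fin n)) := by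
    intro i; simpa using hM.mulVec_eigenvectorBasis i
  have hinb : ∀ i, (inner ℝ y (b i) : ℝ) = c i := by
    intro i
    rw [real_inner_comm, ← OrthonormalBasis.repr_apply_apply]
  constructor
  · have h1 : M.mulVec y = ∑ i, (c i * hM.eigenvalues i) • (b i : EuclideanSpace ℝ (Fin n)) := by
      calc M.mulVec y = M.mulVecLin y := by rw [Matrix.mulVecLin_apply]
        _ = M.mulVecLin (∑ i, c i • (b i : EuclideanSpace ℝ (Fin n))) := by
            simp only [hyc, WithLp.ofLp_sum, WithLp.ofLp_smul]
        _ = ∑ i, (c i * hM.eigenvalues i) • (b i : EuclideanSpace ℝ (Fin n)) := by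
            rw [map_sum, WithLp.ofLp_sum]
            refine Finset.sum_congr rfl fun i _ => ?_
            rw [WithLp.ofLp_smul, map_smul, Matrix.mulVecLin_apply, hMb i, smul_smul]
    rw [← inner_eq_dot]
    calc (inner ℝ y (WithLp.toLp 2 (M.mulVec y)) : ℝ)
        = ∑ i, (c i * hM.eigenvalues i) * (inner ℝ y (b i) : ℝ) := by
          rw [h1, WithLp.toLp_ofLp, inner_sum]
          exact Finset.sum_congr rfl fun i _ => real_inner_smul_right _ _ _
      _ = ∑ i, hM.eigenvalues i * (c i)^2 := by
          refine Finset.sum_congr rfl fun i _ => ?_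
          rw [hinb i]; ring
  · rw [← inner_eq_dot]
    calc (inner ℝ y y : ℝ)
        = (inner ℝ y (∑ i, c i • (b i : EuclideanSpace ℝ (Fin n))) : ℝ) := by rw [← hyc]
      _ = ∑ i, c i * (inner ℝ y (b i) : ℝ) := by
          rw [inner_sum]
          exact Finset.sum_congr rfl fun i _ => real_inner_smul_right _ _ _
      _ = ∑ i, (c i)^2 := by
          refine Finset.sum_congr rfl fun i _ => ?_
          rw [hinb i]; ring

lemma spectral_bound {n : ℕ} (M : Matrix (Fin n) (Fin n) ℝ) (hM : M.IsHermitian) (R : ℝ)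
    (U : Finset (Fin n)) (k : ℕ) (hk1 : 1 ≤ k) (hkn : k + U.card ≤ n)
    (hform : ∀ y : Fin n → ℝ, (∀ u ∈ U, y u = 0) →
      dotProduct y (M.mulVec y) ≤ R * dotProduct y y)
    (hkk : k - 1 < n) :
    sortedEigenvalues M ⟨k - 1, hkk⟩ ≤ R := by
  by_contra hlt
  push_neg at hlt
  rw [sortedEigenvalues, dif_pos hM] at hlt
  set ev := hM.eigenvalues with hev
  set σ := Tuple.sort ev with hσ
  -- the set of large eigenvalues
  set T : Finset (Fin n) := Finset.univ.filter (fun i => R < ev i) with hT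
  have hmono := Tuple.monotone_sort ev
  have himg : (Finset.Ici (⟨k - 1, hkk⟩ : Fin n)).image σ ⊆ T := by
    intro i hi
    obtain ⟨j, hj, rfl⟩ := Finset.mem_image.1 hi
    rw [Finset.mem_Ici] at hj
    have := hmono hj
    simp only [Function.comp] at this
    rw [hT, Finset.mem_filter]
    exact ⟨Finset.mem_univ _, lt_of_lt_of_le hlt this⟩
  have hcardIci : (Finset.Ici (⟨k - 1, hkk⟩ : Fin n)).card = n - (k - 1) := by simp
  have hTcard : n - (k - 1) ≤ T.card := by
    rw [← hcardIci, ← Finset.card_image_of_injective _ (Equiv.injective σ)]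
    exact Finset.card_le_card himg
  have hTc : Tᶜ.card ≤ k - 1 := by
    have := Finset.card_compl (α := Fin n) T
    rw [Fintype.card_fin] at this
    have hTn : T.card ≤ n := by
      have := Finset.card_le_card (Finset.subset_univ T)
      simpa using this
    omega
  -- linear map with too-small codomain
  set b := hM.eigenvectorBasis with hb
  set Φ : EuclideanSpace ℝ (Fin n) →ₗ[ℝ] ((↥(Tᶜ : Finset (Fin n)) → ℝ) × (↥U → ℝ)) :=
    LinearMap.prod
      ((LinearMap.funLeft ℝ ℝ (Subtype.val : ↥(Tᶜ : Finset (Fin n)) → Fin n)).comp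
        ((WithLp.linearEquiv 2 ℝ (Fin n → ℝ)).toLinearMap.comp b.repr.toLinearEquiv.toLinearMap))
      ((LinearMap.funLeft ℝ ℝ (Subtype.val : ↥U → Fin n)).comp
        (WithLp.linearEquiv 2 ℝ (Fin n → ℝ)).toLinearMap) with hΦ
  have hnoninj : ¬ Function.Injective Φ := by
    intro hinj
    have h1 := LinearMap.finrank_le_finrank_of_injective hinj
    rw [finrank_euclideanSpace, Fintype.card_fin, Module.finrank_prod,
      Module.finrank_fintype_fun_eq_card, Module.finrank_fintype_fun_eq_card,
      Fintype.card_coe, Fintype.card_coe] at h1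
    omega
  obtain ⟨y1, y2, heq, hne⟩ := Function.not_injective_iff.1 hnoninj
  set y : EuclideanSpace ℝ (Fin n) := y1 - y2 with hy
  have hy0 : y ≠ 0 := sub_ne_zero.2 hne
  have hΦy : Φ y = 0 := by rw [hy, map_sub, heq, sub_self]
  have hrepr0 : ∀ i ∈ Tᶜ, b.repr y i = 0 := by
    intro i hi
    have := congrFun (congrArg Prod.fst hΦy) ⟨i, hi⟩
    exact this
  have hU0 : ∀ u ∈ U, y u = 0 := by
    intro u hu
    have := congrFun (congrArg Prod.snd hΦy) ⟨u, hu⟩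
    exact this
  obtain ⟨hA, hB⟩ := quad_expand M hM y
  have hczero : ∀ i, i ∉ T → b.repr y i = 0 := by
    intro i hi
    exact hrepr0 i (Finset.mem_compl.2 hi)
  have hcex : ∃ i, b.repr y i ≠ 0 := by
    by_contra hc
    push_neg at hc
    apply hy0
    have : b.repr y = 0 := by
      ext i
      exact hc i
    exact b.repr.map_eq_zero_iff.1 this
  obtain ⟨i₀, hi₀⟩ := hcex
  have hi₀T : i₀ ∈ T := by
    by_contra h
    exact hi₀ (hczero i₀ h)
  have hstrict : R * dotProduct y y < dotProduct y (M.mulVec y) := by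
    rw [hA, hB, Finset.mul_sum]
    refine Finset.sum_lt_sum ?_ ⟨i₀, Finset.mem_univ _, ?_⟩
    · intro i _
      by_cases hiT : i ∈ T
      · have hRi : R < ev i := (Finset.mem_filter.1 hiT).2
        exact mul_le_mul_of_nonneg_right (le_of_lt hRi) (sq_nonneg _)
      · rw [hczero i hiT]
        simp
    · have hRi : R < ev i₀ := (Finset.mem_filter.1 hi₀T).2
      have : (0:ℝ) < (b.repr y i₀)^2 := by positivity
      exact mul_lt_mul_of_pos_right hRi this
  have := hform y hU0
  linarith


lemma normLap_herm {n : ℕ} (G : SimpleGraph (Fin n)) : (normLapMatrix G).IsHermitian := by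
  refine Matrix.IsHermitian.sub Matrix.isHermitian_one ?_
  unfold Matrix.IsHermitian
  rw [Matrix.conjTranspose_mul, Matrix.conjTranspose_mul, Matrix.diagonal_conjTranspose]
  have hA : Matrix.conjTranspose (G.adjMatrix ℝ) = G.adjMatrix ℝ := by
    rw [Matrix.conjTranspose_eq_transpose_of_trivial, SimpleGraph.transpose_adjMatrix]
  rw [hA]
  have hD : star (fun v => (Real.sqrt (G.degree v))⁻¹) = fun v : Fin n => (Real.sqrt (G.degree v))⁻¹ := by
    funext v; simp
  rw [hD, Matrix.mul_assoc]

lemma quad_normLap {n : ℕ} (G : SimpleGraph (Fin n)) (y : Fin n → ℝ) :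
    dotProduct y ((normLapMatrix G).mulVec y) =
      dotProduct y y -
        dotProduct (fun v => (Real.sqrt (G.degree v))⁻¹ * y v)
          ((G.adjMatrix ℝ).mulVec (fun v => (Real.sqrt (G.degree v))⁻¹ * y v)) := by
  set z : Fin n → ℝ := fun v => (Real.sqrt (G.degree v))⁻¹ * y v with hz
  set Dh : Matrix (Fin n) (Fin n) ℝ := Matrix.diagonal (fun v => (Real.sqrt (G.degree v))⁻¹) with hD
  have h1 : (normLapMatrix G).mulVec y = y - Dh.mulVec ((G.adjMatrix ℝ).mulVec (Dh.mulVec y)) := by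
    rw [normLapMatrix, Matrix.sub_mulVec, Matrix.one_mulVec, Matrix.mulVec_mulVec,
      Matrix.mulVec_mulVec]
  have h2 : Dh.mulVec y = z := by
    funext v
    rw [hD, Matrix.mulVec_diagonal, hz]
  have h3 : ∀ w : Fin n → ℝ, dotProduct y (Dh.mulVec w) = dotProduct z w := by
    intro w
    simp only [dotProduct, hD, Matrix.mulVec_diagonal, hz]
    exact Finset.sum_congr rfl fun v _ => by ring
  rw [h1, dotProduct_sub, h2, h3]

lemma quad_cover {n : ℕ} (G : SimpleGraph (Fin n)) (U : Finset (Fin n))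
    (hcov : ∀ a b, G.Adj a b → a ∈ U ∨ b ∈ U) (y : Fin n → ℝ) (hy : ∀ u ∈ U, y u = 0) :
    dotProduct y ((normLapMatrix G).mulVec y) = dotProduct y y := by
  rw [quad_normLap]
  have hz0 : dotProduct (fun v => (Real.sqrt (G.degree v))⁻¹ * y v)
      ((G.adjMatrix ℝ).mulVec (fun v => (Real.sqrt (G.degree v))⁻¹ * y v)) = 0 := by
    set z : Fin n → ℝ := fun v => (Real.sqrt (G.degree v))⁻¹ * y v with hz
    have hzU : ∀ u ∈ U, z u = 0 := by
      intro u hu; rw [hz]; simp [hy u hu]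
    rw [dotProduct]
    refine Finset.sum_eq_zero fun v _ => ?_
    rw [SimpleGraph.adjMatrix_mulVec_apply]
    rw [Finset.mul_sum]
    refine Finset.sum_eq_zero fun w hw => ?_
    have hadj : G.Adj v w := (SimpleGraph.mem_neighborFinset _ _ _).1 hw
    rcases hcov v w hadj with h | h
    · rw [hzU v h, zero_mul]
    · rw [hzU w h, mul_zero]
  rw [hz0, sub_zero]

lemma quad_le_two {n : ℕ} (G : SimpleGraph (Fin n)) (hdeg : ∀ v, 0 < G.degree v)
    (y : Fin n → ℝ) :
    dotProduct y ((normLapMatrix G).mulVec y) ≤ 2 * dotProduct y y := by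
  rw [quad_normLap]
  set z : Fin n → ℝ := fun v => (Real.sqrt (G.degree v))⁻¹ * y v with hz
  have hyy : dotProduct y y = ∑ v, (G.degree v : ℝ) * (z v)^2 := by
    rw [dotProduct]
    refine Finset.sum_congr rfl fun v _ => ?_
    have hd : (0:ℝ) < (G.degree v : ℝ) := by exact_mod_cast hdeg v
    have hsq : Real.sqrt ((G.degree v : ℝ)) ^ 2 = (G.degree v : ℝ) := Real.sq_sqrt (le_of_lt hd)
    rw [hz]
    simp only []
    rw [mul_pow, inv_pow, hsq, ← mul_assoc, mul_inv_cancel₀ (ne_of_gt hd), one_mul, sq]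
  have hAz : dotProduct z ((G.adjMatrix ℝ).mulVec z) =
      ∑ v, ∑ w ∈ G.neighborFinset v, z v * z w := by
    rw [dotProduct]
    refine Finset.sum_congr rfl fun v _ => ?_
    rw [SimpleGraph.adjMatrix_mulVec_apply, Finset.mul_sum]
  have hkey : 0 ≤ ∑ v, ∑ w ∈ G.neighborFinset v, (z v + z w)^2 :=
    Finset.sum_nonneg fun v _ => Finset.sum_nonneg fun w _ => sq_nonneg _
  have hsym : ∑ v, ∑ w ∈ G.neighborFinset v, (z w)^2 = ∑ v, (G.degree v : ℝ) * (z v)^2 := by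
    have h1 : ∀ v : Fin n, ∑ w ∈ G.neighborFinset v, (z w)^2 =
        ∑ w, if G.Adj v w then (z w)^2 else 0 := by
      intro v
      rw [SimpleGraph.neighborFinset_eq_filter, Finset.sum_filter]
    have h2 : ∀ w : Fin n, Finset.univ.filter (fun v => G.Adj v w) = G.neighborFinset w := by
      intro w
      ext v
      rw [Finset.mem_filter, SimpleGraph.mem_neighborFinset, SimpleGraph.adj_comm]
      simp
    calc ∑ v, ∑ w ∈ G.neighborFinset v, (z w)^2
        = ∑ v, ∑ w, (if G.Adj v w then (z w)^2 else 0) := by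
          exact Finset.sum_congr rfl fun v _ => h1 v
      _ = ∑ w, ∑ v, (if G.Adj v w then (z w)^2 else 0) := Finset.sum_comm
      _ = ∑ w, (G.degree w : ℝ) * (z w)^2 := by
          refine Finset.sum_congr rfl fun w _ => ?_
          rw [← Finset.sum_filter, h2 w, Finset.sum_const,
            SimpleGraph.card_neighborFinset_eq_degree, nsmul_eq_mul]
  have hexpand : ∑ v, ∑ w ∈ G.neighborFinset v, (z v + z w)^2 =
      2 * (∑ v, (G.degree v : ℝ) * (z v)^2) +
      2 * (∑ v, ∑ w ∈ G.neighborFinset v, z v * z w) := by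
    have hsplit : ∀ v : Fin n, ∑ w ∈ G.neighborFinset v, (z v + z w)^2 =
        (G.degree v : ℝ) * (z v)^2 + (∑ w ∈ G.neighborFinset v, (z w)^2)
          + 2 * (∑ w ∈ G.neighborFinset v, z v * z w) := by
      intro v
      calc ∑ w ∈ G.neighborFinset v, (z v + z w)^2
          = ∑ w ∈ G.neighborFinset v, ((z v)^2 + ((z w)^2 + 2 * (z v * z w))) := by
            exact Finset.sum_congr rfl fun w _ => by ring
        _ = (∑ _w ∈ G.neighborFinset v, (z v)^2) + ((∑ w ∈ G.neighborFinset v, (z w)^2)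
            + ∑ w ∈ G.neighborFinset v, 2 * (z v * z w)) := by
            rw [Finset.sum_add_distrib, Finset.sum_add_distrib]
        _ = (G.degree v : ℝ) * (z v)^2 + (∑ w ∈ G.neighborFinset v, (z w)^2)
            + 2 * (∑ w ∈ G.neighborFinset v, z v * z w) := by
            rw [Finset.sum_const, SimpleGraph.card_neighborFinset_eq_degree, nsmul_eq_mul,
              ← Finset.mul_sum]
            ring
    calc ∑ v, ∑ w ∈ G.neighborFinset v, (z v + z w)^2
        = ∑ v, ((G.degree v : ℝ) * (z v)^2 + (∑ w ∈ G.neighborFinset v, (z w)^2)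
            + 2 * (∑ w ∈ G.neighborFinset v, z v * z w)) := by
          exact Finset.sum_congr rfl fun v _ => hsplit v
      _ = (∑ v, (G.degree v : ℝ) * (z v)^2) + (∑ v, ∑ w ∈ G.neighborFinset v, (z w)^2)
          + 2 * (∑ v, ∑ w ∈ G.neighborFinset v, z v * z w) := by
          rw [Finset.sum_add_distrib, Finset.sum_add_distrib, ← Finset.mul_sum]
      _ = 2 * (∑ v, (G.degree v : ℝ) * (z v)^2) +
          2 * (∑ v, ∑ w ∈ G.neighborFinset v, z v * z w) := by
          rw [hsym]; ring
  rw [hyy, hAz]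
  linarith [hkey, hexpand]



theorem normalized_laplacian_upper_bound {V : ℕ} (hV : 2 ≤ V) (G : SimpleGraph (Fin V))
    (hG : G.Connected) (hcyc : ¬ Nonempty (G ≃g SimpleGraph.cycleGraph V))
    (E Vstar : ℕ) (hE : E = G.edgeFinset.card)
    (hVstar : Vstar = (Finset.univ.filter fun v => 2 ≤ G.degree v).card)
    (k : ℕ) (hk2 : 2 ≤ k) (hkV : k ≤ V)
    (hcond : 2 * (k : ℤ) - V - Vstar - 1 + E ≤ 0) :
    sortedEigenvalues (normLapMatrix G) ⟨k - 1, by omega⟩ ≤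
      1 - Real.cos ((2 * (k : ℝ) + 3 * E - V - Vstar - 1) * π / (2 * E)) := by
  classical
  -- basic facts
  have hncardE : G.edgeSet.ncard = E := by rw [eCard, hE]
  have hVsV : Vstar ≤ V := by
    rw [hVstar]
    calc (Finset.univ.filter fun v => 2 ≤ G.degree v).card
        ≤ (Finset.univ : Finset (Fin V)).card := Finset.card_le_card (Finset.filter_subset _ _)
      _ = V := by simp
  have hcard1 : 1 < Fintype.card (Fin V) := by rw [Fintype.card_fin]; omega
  have hdeg : ∀ v, 0 < G.degree v := by
    intro v
    rw [SimpleGraph.degree_pos_iff_exists_adj]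
    obtain ⟨w, hw⟩ := Fintype.exists_ne_of_one_lt_card hcard1 v
    obtain ⟨p⟩ := hG.preconnected v w
    cases p with
    | nil => exact absurd rfl hw.symm
    | cons h q => exact ⟨_, h⟩
  have hE1 : 1 ≤ E := by
    obtain ⟨w, hw⟩ := (SimpleGraph.degree_pos_iff_exists_adj _ _).1 (hdeg ⟨0, by omega⟩)
    have : s(⟨0, by omega⟩, w) ∈ G.edgeFinset := SimpleGraph.mem_edgeFinset.2 hw
    have hpos : 0 < G.edgeFinset.card := Finset.card_pos.2 ⟨_, this⟩
    omega
  have hVE : V ≤ E + 1 := by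
    have := conn_card_le (Nat.card (Fin V)) (Fin V) G le_rfl hG
    rw [Nat.card_eq_fintype_card, Fintype.card_fin, hncardE] at this
    exact this
  -- the slack s
  set sZ : ℤ := (V : ℤ) + Vstar + 1 - E - 2 * k with hsZdef
  have hsZ0 : 0 ≤ sZ := by omega
  have hsZE : sZ ≤ (E : ℤ) - 1 := by omega
  have hEpos : (0:ℝ) < (E:ℝ) := by exact_mod_cast hE1
  -- rewrite the RHS
  have hang : (2 * (k : ℝ) + 3 * E - V - Vstar - 1) * π / (2 * E) =
      π - (sZ : ℝ) * π / (2 * E) := by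
    have h1 : 2 * (k : ℝ) + 3 * E - V - Vstar - 1 = 2 * E - (sZ : ℝ) := by
      rw [hsZdef]; push_cast; ring
    rw [h1]
    field_simp
  have hRHS : 1 - Real.cos ((2 * (k : ℝ) + 3 * E - V - Vstar - 1) * π / (2 * E)) =
      1 + Real.cos ((sZ : ℝ) * π / (2 * E)) := by
    rw [hang, Real.cos_pi_sub]
    ring
  rw [hRHS]
  by_cases hs0 : sZ = 0
  · -- trivial bound: RHS = 2
    have h2 : 1 + Real.cos ((sZ : ℝ) * π / (2 * E)) = 2 := by
      rw [hs0]
      norm_num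
    rw [h2]
    exact spectral_bound (normLapMatrix G) (normLap_herm G) 2 ∅ k (by omega)
      (by simp; omega)
      (fun y _ => quad_le_two G hdeg y) (by omega)
  · -- s ≥ 1 : use the vertex cover
    have hs1 : 1 ≤ sZ := by omega
    obtain ⟨U, hUcov, hUcard⟩ := cover_lemma (Nat.card (Fin V)) (Fin V) G le_rfl hG
    rw [hncardE] at hUcard
    have hcos0 : 0 ≤ Real.cos ((sZ : ℝ) * π / (2 * E)) := by
      apply Real.cos_nonneg_of_mem_Icc
      constructor
      · have hsnn : (0:ℝ) ≤ (sZ : ℝ) := by exact_mod_cast hsZ0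
        have h1 : 0 ≤ (sZ : ℝ) * π / (2 * E) := by positivity
        linarith [Real.pi_pos]
      · have hsE : (sZ : ℝ) ≤ (E : ℝ) := by exact_mod_cast le_trans hsZE (by omega)
        have h2 : (sZ : ℝ) * π / (2 * E) ≤ (E : ℝ) * π / (2 * E) := by
          gcongr
        have h3 : (E : ℝ) * π / (2 * E) = π / 2 := by
          field_simp
        linarith
    apply spectral_bound (normLapMatrix G) (normLap_herm G) _ U k (by omega) ?_ ?_ (by omega)
    · -- k + U.card ≤ V
      have h2k : 2 * (k:ℤ) ≤ (V:ℤ) + Vstar - E := by omega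
      omega
    · intro y hy
      rw [quad_cover G U hUcov y hy]
      have hyy : 0 ≤ dotProduct y y :=
        Finset.sum_nonneg fun i _ => mul_self_nonneg _
      nlinarith
end

section
/- Let G be a finite connected simple graph on V ≥ 2 vertices, with minimal vertex degree deg_min(G) and maximal vertex degree deg_max(G). Then for every index k with 0 ≤ k ≤ V − 1, the eigenvalues of the Laplacian matrix and of the normalized Laplacian satisfy α_k(G) · deg_max(G) ≥ γ_k(G) ≥ α_k(G) · deg_min(G). -/
open scoped Classical
open Real Finset

section Aux

open scoped RealInnerProductSpace
open Matrix

variable {n : ℕ}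

lemma inner_toEuclideanLin (M : Matrix (Fin n) (Fin n) ℝ) (x y : EuclideanSpace ℝ (Fin n)) :
    ⟪x, Matrix.toEuclideanLin M y⟫ = (x : Fin n → ℝ) ⬝ᵥ (M *ᵥ (y : Fin n → ℝ)) := by
  simp [PiLp.inner_apply, Matrix.toEuclideanLin_apply, dotProduct, RCLike.inner_apply]
  exact Finset.sum_congr rfl fun i _ => mul_comm _ _

lemma inner_euclidean (x y : EuclideanSpace ℝ (Fin n)) :
    ⟪x, y⟫ = (x : Fin n → ℝ) ⬝ᵥ (y : Fin n → ℝ) := by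
  simp [PiLp.inner_apply, dotProduct, RCLike.inner_apply]
  exact Finset.sum_congr rfl fun i _ => mul_comm _ _

lemma toEuclideanLin_eigen_s16 {B : Matrix (Fin n) (Fin n) ℝ} (hB : B.IsHermitian) (i : Fin n) :
    Matrix.toEuclideanLin B (hB.eigenvectorBasis i) =
      hB.eigenvalues i • hB.eigenvectorBasis i := by
  have h := hB.mulVec_eigenvectorBasis i
  apply (WithLp.equiv 2 (Fin n → ℝ)).injective
  simpa [Matrix.toEuclideanLin_apply] using h

lemma quad_expand_s16 {B : Matrix (Fin n) (Fin n) ℝ} (hB : B.IsHermitian)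
    (x : EuclideanSpace ℝ (Fin n)) :
    ⟪x, Matrix.toEuclideanLin B x⟫ =
      ∑ i, hB.eigenvalues i * ⟪hB.eigenvectorBasis i, x⟫ ^ 2 := by
  have hT : (Matrix.toEuclideanLin B).IsSymmetric :=
    Matrix.isHermitian_iff_isSymmetric.1 hB
  rw [← (hB.eigenvectorBasis).sum_inner_mul_inner x (Matrix.toEuclideanLin B x)]
  refine Finset.sum_congr rfl fun i _ => ?_
  rw [← hT (hB.eigenvectorBasis i) x, toEuclideanLin_eigen_s16 hB i, real_inner_smul_left,
    real_inner_comm x]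
  ring

lemma inner_zero_of_span {w : OrthonormalBasis (Fin n) ℝ (EuclideanSpace ℝ (Fin n))}
    {s : Finset (Fin n)} {x : EuclideanSpace ℝ (Fin n)}
    (hx : x ∈ Submodule.span ℝ (w '' ↑s)) {i : Fin n} (hi : i ∉ s) :
    ⟪w i, x⟫ = 0 := by
  induction hx using Submodule.span_induction with
  | mem y hy =>
      obtain ⟨j, hj, rfl⟩ := hy
      exact w.orthonormal.2 (fun h => hi (h ▸ hj))
  | zero => simp
  | add y z _ _ hy hz => rw [inner_add_right, hy, hz, add_zero]
  | smul a y _ hy => rw [real_inner_smul_right, hy, mul_zero]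

lemma norm_expand (w : OrthonormalBasis (Fin n) ℝ (EuclideanSpace ℝ (Fin n)))
    (x : EuclideanSpace ℝ (Fin n)) : ⟪x, x⟫ = ∑ i, ⟪w i, x⟫ ^ 2 := by
  rw [← w.sum_inner_mul_inner x x]
  exact Finset.sum_congr rfl fun i _ => by rw [real_inner_comm x]; ring

lemma quad_le {B : Matrix (Fin n) (Fin n) ℝ} (hB : B.IsHermitian) {s : Finset (Fin n)}
    {m : ℝ} (hs : ∀ i ∈ s, hB.eigenvalues i ≤ m) {x : EuclideanSpace ℝ (Fin n)}
    (hx : x ∈ Submodule.span ℝ (hB.eigenvectorBasis '' ↑s)) :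
    ⟪x, Matrix.toEuclideanLin B x⟫ ≤ m * ⟪x, x⟫ := by
  rw [quad_expand_s16 hB, norm_expand hB.eigenvectorBasis, Finset.mul_sum]
  refine Finset.sum_le_sum fun i _ => ?_
  by_cases hi : i ∈ s
  · exact mul_le_mul_of_nonneg_right (hs i hi) (sq_nonneg _)
  · rw [inner_zero_of_span hx hi]; simp

lemma quad_ge {B : Matrix (Fin n) (Fin n) ℝ} (hB : B.IsHermitian) {s : Finset (Fin n)}
    {m : ℝ} (hs : ∀ i ∈ s, m ≤ hB.eigenvalues i) {x : EuclideanSpace ℝ (Fin n)}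
    (hx : x ∈ Submodule.span ℝ (hB.eigenvectorBasis '' ↑s)) :
    m * ⟪x, x⟫ ≤ ⟪x, Matrix.toEuclideanLin B x⟫ := by
  rw [quad_expand_s16 hB, norm_expand hB.eigenvectorBasis, Finset.mul_sum]
  refine Finset.sum_le_sum fun i _ => ?_
  by_cases hi : i ∈ s
  · exact mul_le_mul_of_nonneg_right (hs i hi) (sq_nonneg _)
  · rw [inner_zero_of_span hx hi]; simp

lemma finrank_span_onb (w : OrthonormalBasis (Fin n) ℝ (EuclideanSpace ℝ (Fin n)))
    (s : Finset (Fin n)) :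
    Module.finrank ℝ (Submodule.span ℝ (w '' ↑s)) = s.card := by
  have hli : LinearIndependent ℝ (fun i : s => w i) :=
    (w.orthonormal.comp (fun i : s => (i : Fin n)) Subtype.val_injective).linearIndependent
  have h := finrank_span_eq_card hli
  have hr : Set.range (fun i : s => w i) = w '' ↑s := by
    ext y; simp
  rw [hr] at h
  simpa using h

lemma exists_ne_zero_mem_inf (W₁ W₂ : Submodule ℝ (EuclideanSpace ℝ (Fin n)))
    (h : n < Module.finrank ℝ W₁ + Module.finrank ℝ W₂) :
    ∃ x, x ∈ W₁ ⊓ W₂ ∧ x ≠ 0 := by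
  have key := Submodule.finrank_sup_add_finrank_inf_eq W₁ W₂
  have hsup : Module.finrank ℝ ↥(W₁ ⊔ W₂) ≤ n := by
    simpa [finrank_euclideanSpace] using (W₁ ⊔ W₂).finrank_le
  have hpos : 0 < Module.finrank ℝ ↥(W₁ ⊓ W₂) := by omega
  rw [Module.finrank_pos_iff] at hpos
  obtain ⟨⟨x, hx⟩, hx0⟩ := exists_ne (0 : ↥(W₁ ⊓ W₂))
  exact ⟨x, hx, fun h0 => hx0 (Subtype.ext h0)⟩

lemma key {A B : Matrix (Fin n) (Fin n) ℝ} (hA : A.IsHermitian) (hB : B.IsHermitian)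
    (e : EuclideanSpace ℝ (Fin n) ≃ₗ[ℝ] EuclideanSpace ℝ (Fin n))
    (hq : ∀ x, ⟪x, Matrix.toEuclideanLin B x⟫ = ⟪e x, Matrix.toEuclideanLin A (e x)⟫)
    (hApos : ∀ i, 0 ≤ hA.eigenvalues i) {c C : ℝ}
    (hc : ∀ x, c * ⟪x, x⟫ ≤ ⟪e x, e x⟫) (hC : ∀ x, ⟪e x, e x⟫ ≤ C * ⟪x, x⟫) (k : Fin n) :
    c * hA.eigenvalues (Tuple.sort hA.eigenvalues k) ≤
      hB.eigenvalues (Tuple.sort hB.eigenvalues k) ∧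
    hB.eigenvalues (Tuple.sort hB.eigenvalues k) ≤
      C * hA.eigenvalues (Tuple.sort hA.eigenvalues k) := by
  set μ := hB.eigenvalues with hμ
  set ν := hA.eigenvalues with hν
  set σ := Tuple.sort μ with hσ
  set τ := Tuple.sort ν with hτ
  have hmonoB : Monotone (μ ∘ σ) := Tuple.monotone_sort μ
  have hmonoA : Monotone (ν ∘ τ) := Tuple.monotone_sort ν
  have hcard : ∀ (prm : Equiv.Perm (Fin n)) (t : Finset (Fin n)),
      (t.image prm).card = t.card := fun prm t => Finset.card_image_of_injective t prm.injective
  have hdim : ∀ (wb : OrthonormalBasis (Fin n) ℝ (EuclideanSpace ℝ (Fin n)))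
      (t : Finset (Fin n)),
      Module.finrank ℝ (Submodule.comap e.toLinearMap (Submodule.span ℝ (wb '' ↑t)))
        = t.card := by
    intro wb t
    rw [Submodule.comap_equiv_eq_map_symm, LinearEquiv.finrank_map_eq, finrank_span_onb]
  constructor
  · -- lower bound : c * ν (τ k) ≤ μ (σ k)
    obtain ⟨x, hx, hx0⟩ := exists_ne_zero_mem_inf
      (Submodule.span ℝ (hB.eigenvectorBasis '' ↑((Finset.Iic k).image σ)))
      (Submodule.comap e.toLinearMap
        (Submodule.span ℝ (hA.eigenvectorBasis '' ↑((Finset.Ici k).image τ))))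
      (by
        rw [finrank_span_onb, hdim, hcard, hcard, Fin.card_Iic, Fin.card_Ici]
        have := k.2; omega)
    obtain ⟨hx1, hx2⟩ := hx
    simp only [SetLike.mem_coe, Submodule.mem_comap, LinearEquiv.coe_coe] at hx1 hx2
    have h1 : ⟪x, Matrix.toEuclideanLin B x⟫ ≤ μ (σ k) * ⟪x, x⟫ := by
      refine quad_le hB ?_ hx1
      intro i hi
      obtain ⟨j, hj, rfl⟩ := Finset.mem_image.1 hi
      exact hmonoB (Finset.mem_Iic.1 hj)
    have h2 : ν (τ k) * ⟪e x, e x⟫ ≤ ⟪e x, Matrix.toEuclideanLin A (e x)⟫ := by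
      refine quad_ge hA ?_ hx2
      intro i hi
      obtain ⟨j, hj, rfl⟩ := Finset.mem_image.1 hi
      exact hmonoA (Finset.mem_Ici.1 hj)
    have h3 : ν (τ k) * (c * ⟪x, x⟫) ≤ ν (τ k) * ⟪e x, e x⟫ :=
      mul_le_mul_of_nonneg_left (hc x) (hApos _)
    have hxx : (0:ℝ) < ⟪x, x⟫ := by
      rw [real_inner_self_eq_norm_mul_norm]
      exact mul_pos (norm_pos_iff.2 hx0) (norm_pos_iff.2 hx0)
    have : c * ν (τ k) * ⟪x, x⟫ ≤ μ (σ k) * ⟪x, x⟫ := by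
      calc c * ν (τ k) * ⟪x, x⟫ = ν (τ k) * (c * ⟪x, x⟫) := by ring
        _ ≤ ν (τ k) * ⟪e x, e x⟫ := h3
        _ ≤ ⟪e x, Matrix.toEuclideanLin A (e x)⟫ := h2
        _ = ⟪x, Matrix.toEuclideanLin B x⟫ := (hq x).symm
        _ ≤ μ (σ k) * ⟪x, x⟫ := h1
    exact le_of_mul_le_mul_right this hxx
  · -- upper bound : μ (σ k) ≤ C * ν (τ k)
    obtain ⟨x, hx, hx0⟩ := exists_ne_zero_mem_inf
      (Submodule.span ℝ (hB.eigenvectorBasis '' ↑((Finset.Ici k).image σ)))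
      (Submodule.comap e.toLinearMap
        (Submodule.span ℝ (hA.eigenvectorBasis '' ↑((Finset.Iic k).image τ))))
      (by
        rw [finrank_span_onb, hdim, hcard, hcard, Fin.card_Iic, Fin.card_Ici]
        have := k.2; omega)
    obtain ⟨hx1, hx2⟩ := hx
    simp only [SetLike.mem_coe, Submodule.mem_comap, LinearEquiv.coe_coe] at hx1 hx2
    have h1 : μ (σ k) * ⟪x, x⟫ ≤ ⟪x, Matrix.toEuclideanLin B x⟫ := by
      refine quad_ge hB ?_ hx1
      intro i hi
      obtain ⟨j, hj, rfl⟩ := Finset.mem_image.1 hi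
      exact hmonoB (Finset.mem_Ici.1 hj)
    have h2 : ⟪e x, Matrix.toEuclideanLin A (e x)⟫ ≤ ν (τ k) * ⟪e x, e x⟫ := by
      refine quad_le hA ?_ hx2
      intro i hi
      obtain ⟨j, hj, rfl⟩ := Finset.mem_image.1 hi
      exact hmonoA (Finset.mem_Iic.1 hj)
    have h3 : ν (τ k) * ⟪e x, e x⟫ ≤ ν (τ k) * (C * ⟪x, x⟫) :=
      mul_le_mul_of_nonneg_left (hC x) (hApos _)
    have hxx : (0:ℝ) < ⟪x, x⟫ := by
      rw [real_inner_self_eq_norm_mul_norm]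
      exact mul_pos (norm_pos_iff.2 hx0) (norm_pos_iff.2 hx0)
    have : μ (σ k) * ⟪x, x⟫ ≤ C * ν (τ k) * ⟪x, x⟫ := by
      calc μ (σ k) * ⟪x, x⟫ ≤ ⟪x, Matrix.toEuclideanLin B x⟫ := h1
        _ = ⟪e x, Matrix.toEuclideanLin A (e x)⟫ := hq x
        _ ≤ ν (τ k) * ⟪e x, e x⟫ := h2
        _ ≤ ν (τ k) * (C * ⟪x, x⟫) := h3
        _ = C * ν (τ k) * ⟪x, x⟫ := by ring
    exact le_of_mul_le_mul_right this hxx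

end Aux

section Main
open scoped RealInnerProductSpace
open Matrix

theorem laplacian_normalized_laplacian_degree_bounds {V : ℕ} (hV : 2 ≤ V)
    (G : SimpleGraph (Fin V)) (hG : G.Connected) (k : Fin V) :
    sortedEigenvalues (normLapMatrix G) k * (G.maxDegree : ℝ) ≥
      sortedEigenvalues (G.lapMatrix ℝ) k ∧
    sortedEigenvalues (G.lapMatrix ℝ) k ≥
      sortedEigenvalues (normLapMatrix G) k * (G.minDegree : ℝ) := by
  -- degrees are positive
  have hdeg : ∀ v, 0 < G.degree v := by
    intro v
    rw [SimpleGraph.degree_pos_iff_exists_adj]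
    have : Nontrivial (Fin V) := Fin.nontrivial_iff_two_le.mpr hV
    obtain ⟨u, hu⟩ := exists_ne v
    obtain ⟨p⟩ := hG.preconnected v u
    cases p with
    | nil => exact absurd rfl hu.symm
    | cons h _ => exact ⟨_, h⟩
  have hdegR : ∀ v, (0:ℝ) < (G.degree v : ℝ) := fun v => by exact_mod_cast hdeg v
  have hsqrt_pos : ∀ v, 0 < Real.sqrt (G.degree v) := fun v => Real.sqrt_pos.2 (hdegR v)
  set N : Matrix (Fin V) (Fin V) ℝ := Matrix.diagonal (fun v => Real.sqrt (G.degree v)) with hN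
  set Ninv : Matrix (Fin V) (Fin V) ℝ :=
    Matrix.diagonal (fun v => (Real.sqrt (G.degree v))⁻¹) with hNinv
  have hNNinv : N * Ninv = 1 := by
    rw [hN, hNinv, Matrix.diagonal_mul_diagonal]
    have h1 : (fun v => Real.sqrt (G.degree v) * (Real.sqrt (G.degree v))⁻¹)
        = fun _ : Fin V => (1:ℝ) := funext fun v => mul_inv_cancel₀ (hsqrt_pos v).ne'
    rw [h1, Matrix.diagonal_one]
  have hNinvN : Ninv * N = 1 := by
    rw [hN, hNinv, Matrix.diagonal_mul_diagonal]
    have h1 : (fun v => (Real.sqrt (G.degree v))⁻¹ * Real.sqrt (G.degree v))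
        = fun _ : Fin V => (1:ℝ) := funext fun v => inv_mul_cancel₀ (hsqrt_pos v).ne'
    rw [h1, Matrix.diagonal_one]
  -- L = N * 𝓛 * N
  have hLNL : G.lapMatrix ℝ = N * normLapMatrix G * N := by
    rw [normLapMatrix, SimpleGraph.lapMatrix]
    rw [Matrix.mul_sub, Matrix.sub_mul, Matrix.mul_one]
    congr 1
    · rw [hN, Matrix.diagonal_mul_diagonal]
      rw [SimpleGraph.degMatrix]
      have h1 : (fun v : Fin V => ((G.degree v : ℝ)))
          = fun v => Real.sqrt (G.degree v) * Real.sqrt (G.degree v) :=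
        funext fun v => (Real.mul_self_sqrt (hdegR v).le).symm
      rw [h1]
    · have h2 : N * (Ninv * G.adjMatrix ℝ * Ninv) * N
          = (N * Ninv) * G.adjMatrix ℝ * (Ninv * N) := by
        simp only [Matrix.mul_assoc]
      rw [h2, hNNinv, hNinvN, Matrix.one_mul, Matrix.mul_one]
  -- 𝓛 = Ninvᴴ * L * Ninv  (hence it is PSD)
  have hNinvH : Ninvᴴ = Ninv := by
    rw [hNinv, Matrix.diagonal_conjTranspose]
    congr 1
  have hnormPSD : (normLapMatrix G).PosSemidef := by
    have h := (SimpleGraph.posSemidef_lapMatrix ℝ G).conjTranspose_mul_mul_same Ninv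
    have heq : Ninvᴴ * G.lapMatrix ℝ * Ninv = normLapMatrix G := by
      have h2 : Ninv * (N * normLapMatrix G * N) * Ninv
          = (Ninv * N) * normLapMatrix G * (N * Ninv) := by
        simp only [Matrix.mul_assoc]
      rw [hNinvH, hLNL, h2, hNinvN, hNNinv, Matrix.one_mul, Matrix.mul_one]
    rwa [heq] at h
  have hA : (normLapMatrix G).IsHermitian := hnormPSD.1
  have hB : (G.lapMatrix ℝ).IsHermitian := (SimpleGraph.posSemidef_lapMatrix ℝ G).1
  -- the linear equivalence given by N
  have hcompNNinv : (Matrix.toEuclideanLin N).comp (Matrix.toEuclideanLin Ninv)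
      = LinearMap.id := by
    apply LinearMap.ext; intro x
    simp only [LinearMap.comp_apply, Matrix.toEuclideanLin_apply, LinearMap.id_apply]
    simp [Matrix.mulVec_mulVec, hNNinv]
  have hcompNinvN : (Matrix.toEuclideanLin Ninv).comp (Matrix.toEuclideanLin N)
      = LinearMap.id := by
    apply LinearMap.ext; intro x
    simp only [LinearMap.comp_apply, Matrix.toEuclideanLin_apply, LinearMap.id_apply]
    simp [Matrix.mulVec_mulVec, hNinvN]
  set e : EuclideanSpace ℝ (Fin V) ≃ₗ[ℝ] EuclideanSpace ℝ (Fin V) :=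
    LinearEquiv.ofLinear (Matrix.toEuclideanLin N) (Matrix.toEuclideanLin Ninv)
      hcompNNinv hcompNinvN with he
  have hex : ∀ x : EuclideanSpace ℝ (Fin V), (e x : Fin V → ℝ) = N *ᵥ (x : Fin V → ℝ) :=
    fun x => rfl
  -- quadratic forms agree
  have hq : ∀ x : EuclideanSpace ℝ (Fin V),
      ⟪x, Matrix.toEuclideanLin (G.lapMatrix ℝ) x⟫ =
        ⟪e x, Matrix.toEuclideanLin (normLapMatrix G) (e x)⟫ := by
    intro x
    rw [inner_toEuclideanLin, inner_toEuclideanLin, hex, hLNL]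
    have hvm : (x : Fin V → ℝ) ᵥ* N = N *ᵥ (x : Fin V → ℝ) := by
      funext i
      rw [hN, Matrix.vecMul_diagonal, Matrix.mulVec_diagonal, mul_comm]
    have h2 : N * normLapMatrix G * N = N * (normLapMatrix G * N) := by
      simp only [Matrix.mul_assoc]
    rw [h2, ← Matrix.mulVec_mulVec, Matrix.dotProduct_mulVec _ N, hvm, Matrix.mulVec_mulVec]
  -- inner product bounds
  have hsq : ∀ (x : EuclideanSpace ℝ (Fin V)),
      ⟪e x, e x⟫ = ∑ i, (G.degree i : ℝ) * (x i)^2 := by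
    intro x
    rw [inner_euclidean, hex]
    simp only [dotProduct]
    refine Finset.sum_congr rfl fun i _ => ?_
    rw [hN, Matrix.mulVec_diagonal]
    have h2 : Real.sqrt (G.degree i) * x i * (Real.sqrt (G.degree i) * x i)
        = (Real.sqrt (G.degree i) * Real.sqrt (G.degree i)) * (x i)^2 := by ring
    rw [h2, Real.mul_self_sqrt (hdegR i).le]
  have hxx : ∀ (x : EuclideanSpace ℝ (Fin V)), ⟪x, x⟫ = ∑ i, (x i)^2 := by
    intro x
    rw [inner_euclidean]
    exact Finset.sum_congr rfl fun i _ => (sq (x i)).symm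
  have hc : ∀ x : EuclideanSpace ℝ (Fin V),
      (G.minDegree : ℝ) * ⟪x, x⟫ ≤ ⟪e x, e x⟫ := by
    intro x
    rw [hsq, hxx, Finset.mul_sum]
    refine Finset.sum_le_sum fun i _ => ?_
    refine mul_le_mul_of_nonneg_right ?_ (sq_nonneg _)
    exact_mod_cast G.minDegree_le_degree i
  have hC : ∀ x : EuclideanSpace ℝ (Fin V),
      ⟪e x, e x⟫ ≤ (G.maxDegree : ℝ) * ⟪x, x⟫ := by
    intro x
    rw [hsq, hxx, Finset.mul_sum]
    refine Finset.sum_le_sum fun i _ => ?_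
    refine mul_le_mul_of_nonneg_right ?_ (sq_nonneg _)
    exact_mod_cast G.degree_le_maxDegree i
  obtain ⟨h1, h2⟩ := key hA hB e hq (fun i => hnormPSD.eigenvalues_nonneg i) hc hC k
  rw [sortedEigenvalues, sortedEigenvalues, dif_pos hA, dif_pos hB]
  exact ⟨by rw [ge_iff_le, mul_comm]; exact h2, by rw [ge_iff_le, mul_comm]; exact h1⟩

end Main
end
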